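/- arXiv:1602.03257 — 7 statements merged into one kernel-verified Lean document; each statement's English description precedes it below -/
import Mathlib

section
/- For any integer N ≥ 2, the function Υ(r) = r · I_{N/2-1}(r) / I_{N/2}(r), defined for r > 0, is strictly increasing on (0,∞), and its limit as r → 0⁺ equals N. -/
open MeasureTheory Real Filter Asymptotics Set

/-- Modified Bessel function of the first kind,
`I_nu(x) = sum_m (x/2)^(2m+nu) / (m! * Gamma (m+nu+1))`. -/
noncomputable def besselI (nu x : Real) : Real :=
  tsum (fun m : Nat => (x / 2) ^ (2 * (m : Real) + nu) / ((m.factorial : Real) * Real.Gamma ((m : Real) + nu + 1)))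

noncomputable def bc (nu : ℝ) (m : ℕ) : ℝ :=
  1 / ((m.factorial : ℝ) * Real.Gamma ((m : ℝ) + nu + 1))

noncomputable def bf (nu t : ℝ) : ℝ := ∑' m : ℕ, bc nu m * t ^ m

lemma bc_pos {nu : ℝ} (hnu : 0 ≤ nu) (m : ℕ) : 0 < bc nu m := by
  have h1 : (0:ℝ) < (m : ℝ) + nu + 1 := by positivity
  have := Real.Gamma_pos_of_pos h1
  have h2 : (0:ℝ) < (m.factorial : ℝ) := by positivity
  unfold bc; positivity

lemma bc_succ {nu : ℝ} (hnu : 0 ≤ nu) (m : ℕ) :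
    bc nu (m + 1) = bc nu m / (((m:ℝ) + 1) * ((m : ℝ) + nu + 1)) := by
  have h1 : (0:ℝ) < (m : ℝ) + nu + 1 := by positivity
  have hG := Real.Gamma_pos_of_pos h1
  have hA : ((m+1 : ℕ) : ℝ) + nu + 1 = ((m:ℝ) + nu + 1) + 1 := by push_cast; ring
  have : Real.Gamma (((m+1 : ℕ) : ℝ) + nu + 1) = ((m:ℝ)+nu+1) * Real.Gamma ((m:ℝ)+nu+1) := by
    rw [hA, Real.Gamma_add_one h1.ne']
  unfold bc
  rw [this, Nat.factorial_succ]
  have h2 : (0:ℝ) < (m.factorial : ℝ) := by positivity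
  push_cast
  field_simp

lemma bc_shift {nu : ℝ} (hnu : 0 < nu) (m : ℕ) :
    bc (nu - 1) m = ((m : ℝ) + nu) * bc nu m := by
  have h1 : (0:ℝ) < (m : ℝ) + nu := by positivity
  have hG := Real.Gamma_pos_of_pos h1
  have hA : (m:ℝ) + (nu - 1) + 1 = (m:ℝ) + nu := by ring
  have hB : (m:ℝ) + nu + 1 = ((m:ℝ) + nu) + 1 := by ring
  unfold bc
  rw [hA, hB, Real.Gamma_add_one h1.ne']
  have h2 : (0:ℝ) < (m.factorial : ℝ) := by positivity
  field_simp

lemma bc_summable_mul {nu : ℝ} (hnu : 0 ≤ nu) {t : ℝ} (ht : 0 ≤ t) :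
    Summable (fun m : ℕ => bc nu m * t ^ m) := by
  rcases eq_or_lt_of_le ht with h | h
  · apply summable_of_ne_finset_zero (s := {0})
    intro m hm
    simp only [Finset.mem_singleton] at hm
    rw [← h, zero_pow hm, mul_zero]
  · apply summable_of_ratio_test_tendsto_lt_one (l := 0) one_pos
    · filter_upwards with m
      have := bc_pos hnu m
      positivity
    · have key : ∀ m : ℕ, ‖bc nu (m+1) * t ^ (m+1)‖ / ‖bc nu m * t ^ m‖
          = t / (((m:ℝ)+1) * ((m:ℝ)+nu+1)) := by
        intro m
        have hb := bc_pos hnu m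
        have hb1 := bc_pos hnu (m+1)
        have hp : (0:ℝ) < t ^ m := pow_pos h m
        rw [Real.norm_eq_abs, Real.norm_eq_abs, abs_of_pos (by positivity),
          abs_of_pos (by positivity), bc_succ hnu m, pow_succ]
        have h1 : (0:ℝ) < ((m:ℝ)+1) * ((m:ℝ)+nu+1) := by positivity
        field_simp
      simp only [key]
      have hle : ∀ m : ℕ, t / (((m:ℝ)+1) * ((m:ℝ)+nu+1)) ≤ t / ((m:ℝ)+1) := by
        intro m
        apply div_le_div_of_nonneg_left h.le (by positivity)
        nlinarith [Nat.cast_nonneg (α := ℝ) m]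
      have hge : ∀ m : ℕ, 0 ≤ t / (((m:ℝ)+1) * ((m:ℝ)+nu+1)) := by
        intro m
        have : (0:ℝ) < ((m:ℝ)+1) * ((m:ℝ)+nu+1) := by positivity
        positivity
      have htt : Tendsto (fun m : ℕ => t / ((m:ℝ)+1)) atTop (nhds 0) := by
        have := (tendsto_const_div_atTop_nhds_zero_nat t).comp (tendsto_add_atTop_nat 1)
        convert this using 2 with m
        simp [Function.comp]
      exact squeeze_zero hge hle htt

lemma bf_pos {nu : ℝ} (hnu : 0 ≤ nu) {t : ℝ} (ht : 0 ≤ t) : 0 < bf nu t := by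
  apply Summable.tsum_pos (bc_summable_mul hnu ht)
    (fun m => by have := bc_pos hnu m; positivity) 0
  simpa using (bc_pos hnu 0)

lemma sign_lemma {s t : ℝ} (hs : 0 < s) (hst : s < t) (m n : ℕ) :
    0 ≤ ((m : ℝ) - n) * (t ^ m * s ^ n - s ^ m * t ^ n) := by
  have ht : 0 < t := hs.trans hst
  rcases le_total n m with h | h
  · obtain ⟨k, rfl⟩ := Nat.exists_eq_add_of_le h
    have h1 : s ^ k ≤ t ^ k := pow_le_pow_left₀ hs.le hst.le k
    have h2 : t ^ (n + k) * s ^ n - s ^ (n + k) * t ^ n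
        = (s ^ n * t ^ n) * (t ^ k - s ^ k) := by rw [pow_add, pow_add]; ring
    have h3 : (0:ℝ) ≤ (n + k : ℕ) - (n : ℝ) := by push_cast; linarith
    rw [h2]
    have hp : (0:ℝ) ≤ s ^ n * t ^ n := by positivity
    exact mul_nonneg h3 (mul_nonneg hp (by linarith))
  · obtain ⟨k, rfl⟩ := Nat.exists_eq_add_of_le h
    have h1 : s ^ k ≤ t ^ k := pow_le_pow_left₀ hs.le hst.le k
    have h2 : t ^ m * s ^ (m + k) - s ^ m * t ^ (m + k)
        = (s ^ m * t ^ m) * (s ^ k - t ^ k) := by rw [pow_add, pow_add]; ring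
    have h3 : ((m:ℝ)) - ((m + k : ℕ) : ℝ) ≤ 0 := by push_cast; linarith
    rw [h2]
    have hp : (0:ℝ) ≤ s ^ m * t ^ m := by positivity
    nlinarith [mul_nonneg_iff.mpr (Or.inr ⟨h3, show s ^ m * t ^ m * (s ^ k - t ^ k) ≤ 0 by nlinarith⟩)]

lemma tsum_prod_mul {x y : ℕ → ℝ} (hx : Summable x) (hy : Summable y)
    (hx0 : ∀ m, 0 ≤ x m) (hy0 : ∀ m, 0 ≤ y m) :
    ∑' p : ℕ × ℕ, x p.1 * y p.2 = (∑' m, x m) * (∑' n, y n) := by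
  have h1 : Summable (fun p : ℕ × ℕ => x p.1 * y p.2) := hx.mul_of_nonneg hy hx0 hy0
  have h2 : ∀ m : ℕ, Summable (fun n : ℕ => x m * y n) := fun m => hy.mul_left (x m)
  rw [Summable.tsum_prod' h1 h2]
  simp_rw [tsum_mul_left, tsum_mul_right]

set_option maxHeartbeats 1000000 in
lemma key_ineq {nu s t : ℝ} (hnu : 1 ≤ nu) (hs : 0 < s) (hst : s < t) :
    bf (nu - 1) s * bf nu t < bf (nu - 1) t * bf nu s := by
  have ht : 0 < t := hs.trans hst
  have hnu0 : (0:ℝ) < nu := lt_of_lt_of_le one_pos hnu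
  have hnu1 : (0:ℝ) ≤ nu - 1 := by linarith
  have ha : ∀ m, 0 < bc (nu - 1) m := bc_pos hnu1
  have hb : ∀ m, 0 < bc nu m := bc_pos hnu0.le
  have Sas : Summable (fun m : ℕ => bc (nu-1) m * s ^ m) := bc_summable_mul hnu1 hs.le
  have Sat : Summable (fun m : ℕ => bc (nu-1) m * t ^ m) := bc_summable_mul hnu1 ht.le
  have Sbs : Summable (fun m : ℕ => bc nu m * s ^ m) := bc_summable_mul hnu0.le hs.le
  have Sbt : Summable (fun m : ℕ => bc nu m * t ^ m) := bc_summable_mul hnu0.le ht.le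
  set F : ℕ × ℕ → ℝ := fun p => (bc (nu-1) p.1 * s ^ p.1) * (bc nu p.2 * t ^ p.2) with hF
  set G : ℕ × ℕ → ℝ := fun p => (bc (nu-1) p.1 * t ^ p.1) * (bc nu p.2 * s ^ p.2) with hG
  have SF : Summable F :=
    Sas.mul_of_nonneg Sbt (fun m => by have := ha m; positivity)
      (fun m => by have := hb m; positivity)
  have SG : Summable G :=
    Sat.mul_of_nonneg Sbs (fun m => by have := ha m; positivity)
      (fun m => by have := hb m; positivity)
  have hFsum : ∑' p, F p = bf (nu-1) s * bf nu t :=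
    tsum_prod_mul Sas Sbt (fun m => by have := ha m; positivity)
      (fun m => by have := hb m; positivity)
  have hGsum : ∑' p, G p = bf (nu-1) t * bf nu s :=
    tsum_prod_mul Sat Sbs (fun m => by have := ha m; positivity)
      (fun m => by have := hb m; positivity)
  set D : ℕ × ℕ → ℝ := fun p => G p - F p with hD
  have SD : Summable D := SG.sub SF
  have SDsw : Summable (fun p : ℕ × ℕ => D p.swap) :=
    ((Equiv.prodComm ℕ ℕ).summable_iff).2 SD
  have hswap : ∑' p : ℕ × ℕ, D p.swap = ∑' p, D p := (Equiv.prodComm ℕ ℕ).tsum_eq D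
  set H : ℕ × ℕ → ℝ := fun p => D p + D p.swap with hH
  have SH : Summable H := SD.add SDsw
  have hHeq : ∀ m n : ℕ, H (m, n)
      = bc nu m * bc nu n * (((m:ℝ) - n) * (t ^ m * s ^ n - s ^ m * t ^ n)) := by
    intro m n
    simp only [hH, hD, hF, hG, Prod.swap]
    rw [bc_shift hnu0 m, bc_shift hnu0 n]
    ring
  have hHnonneg : ∀ p : ℕ × ℕ, 0 ≤ H p := by
    rintro ⟨m, n⟩
    rw [hHeq m n]
    exact mul_nonneg (by have := hb m; have := hb n; positivity) (sign_lemma hs hst m n)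
  have hH01 : 0 < H (0, 1) := by
    rw [hHeq 0 1]
    have h1 := hb 0
    have h2 := hb 1
    have : ((0:ℕ):ℝ) - ((1:ℕ):ℝ) = -1 := by norm_num
    rw [this]
    simp only [pow_zero, pow_one, one_mul, mul_one]
    nlinarith [mul_pos (mul_pos h1 h2) (show (0:ℝ) < t - s by linarith)]
  have hHpos : 0 < ∑' p, H p := Summable.tsum_pos SH hHnonneg (0, 1) hH01
  have hHsum : ∑' p, H p = 2 * ∑' p, D p := by
    rw [hH, Summable.tsum_add SD SDsw, hswap]; ring
  have hDsum : ∑' p, D p = ∑' p, G p - ∑' p, F p := Summable.tsum_sub SG SF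
  rw [hHsum, hDsum, hFsum, hGsum] at hHpos
  linarith

lemma besselI_eq {nu r : ℝ} (hr : 0 < r) :
    besselI nu r = (r / 2) ^ nu * bf nu (r ^ 2 / 4) := by
  have h2 : (0:ℝ) < r / 2 := by linarith
  unfold besselI bf
  rw [← tsum_mul_left]
  congr 1; funext m
  have hpow : (r/2) ^ (2*(m:ℝ) + nu) = (r^2/4) ^ m * (r/2) ^ nu := by
    rw [Real.rpow_add h2]
    congr 1
    have h3 : (2*(m:ℝ)) = ((2*m : ℕ) : ℝ) := by push_cast; ring
    rw [h3, Real.rpow_natCast, pow_mul]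
    congr 1
    rw [div_pow]; norm_num
  rw [hpow]
  unfold bc
  ring

set_option maxHeartbeats 2000000 in
lemma bf_tendsto {nu : ℝ} (hnu : 0 ≤ nu) :
    Tendsto (bf nu) (nhdsWithin 0 (Ioi 0)) (nhds (bc nu 0)) := by
  have S1 : Summable (bc nu) := by
    have := bc_summable_mul hnu (zero_le_one (α := ℝ))
    simpa using this
  have S1' : Summable (fun m => bc nu (m + 1)) := (summable_nat_add_iff 1).2 S1
  set St := ∑' m : ℕ, bc nu (m + 1) with hSt
  have hStnn : 0 ≤ St := tsum_nonneg (fun m => (bc_pos hnu (m+1)).le)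
  have hmem : Ioo (0:ℝ) 1 ∈ nhdsWithin (0:ℝ) (Ioi 0) :=
    Ioo_mem_nhdsGT (by norm_num)
  have hub : ∀ t ∈ Ioo (0:ℝ) 1, bf nu t ≤ bc nu 0 + t * St := by
    intro t ht
    have hts : Summable (fun m : ℕ => bc nu m * t ^ m) := bc_summable_mul hnu ht.1.le
    have hts' : Summable (fun m : ℕ => bc nu (m+1) * t ^ (m+1)) :=
      (summable_nat_add_iff 1).2 hts
    have h0 : bf nu t = bc nu 0 * t ^ 0 + ∑' m : ℕ, bc nu (m+1) * t ^ (m+1) :=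
      Summable.tsum_eq_zero_add hts
    rw [h0]
    simp only [pow_zero, mul_one]
    have htail : ∑' m : ℕ, bc nu (m+1) * t ^ (m+1) ≤ ∑' m : ℕ, bc nu (m+1) * t := by
      apply Summable.tsum_le_tsum _ hts' (S1'.mul_right t)
      intro m
      have h1 : t ^ (m+1) ≤ t ^ 1 := pow_le_pow_of_le_one ht.1.le ht.2.le (by omega)
      rw [pow_one] at h1
      exact mul_le_mul_of_nonneg_left h1 (bc_pos hnu (m+1)).le
    rw [tsum_mul_right] at htail
    linarith [htail]
  have hlb : ∀ t ∈ Ioo (0:ℝ) 1, bc nu 0 ≤ bf nu t := by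
    intro t ht
    have hts : Summable (fun m : ℕ => bc nu m * t ^ m) := bc_summable_mul hnu ht.1.le
    have h0 : bf nu t = bc nu 0 * t ^ 0 + ∑' m : ℕ, bc nu (m+1) * t ^ (m+1) :=
      Summable.tsum_eq_zero_add hts
    rw [h0]
    simp only [pow_zero, mul_one]
    have : 0 ≤ ∑' m : ℕ, bc nu (m+1) * t ^ (m+1) :=
      tsum_nonneg (fun m => by have := bc_pos hnu (m+1); have := ht.1.le; positivity)
    linarith
  have hup : Tendsto (fun t : ℝ => bc nu 0 + t * St) (nhdsWithin 0 (Ioi 0)) (nhds (bc nu 0)) := by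
    have : Tendsto (fun t : ℝ => bc nu 0 + t * St) (nhds 0) (nhds (bc nu 0 + 0 * St)) := by
      exact (continuous_const.add (continuous_id.mul continuous_const)).tendsto 0
    simpa using this.mono_left nhdsWithin_le_nhds
  apply tendsto_of_tendsto_of_tendsto_of_le_of_le' tendsto_const_nhds hup
  · filter_upwards [hmem] with t ht
    exact hlb t ht
  · filter_upwards [hmem] with t ht
    exact hub t ht

theorem stmt_3 (N : ℕ) (hN : 2 ≤ N) :
    StrictMonoOn (fun r : ℝ => r * besselI ((N : ℝ) / 2 - 1) r / besselI ((N : ℝ) / 2) r)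
        (Set.Ioi 0) ∧
      Filter.Tendsto (fun r : ℝ => r * besselI ((N : ℝ) / 2 - 1) r / besselI ((N : ℝ) / 2) r)
        (nhdsWithin 0 (Set.Ioi 0)) (nhds (N : ℝ)) := by
  set ν : ℝ := (N : ℝ) / 2 with hν
  have hN2 : (2:ℝ) ≤ (N : ℝ) := by exact_mod_cast hN
  have hν1 : (1:ℝ) ≤ ν := by rw [hν]; linarith
  have hν0 : (0:ℝ) < ν := lt_of_lt_of_le one_pos hν1
  have hνm : (0:ℝ) ≤ ν - 1 := by linarith
  have hform : ∀ r : ℝ, 0 < r →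
      r * besselI (ν - 1) r / besselI ν r = 2 * bf (ν - 1) (r^2/4) / bf ν (r^2/4) := by
    intro r hr
    have h2 : (0:ℝ) < r / 2 := by linarith
    have hp : (0:ℝ) < (r/2) ^ (ν - 1) := Real.rpow_pos_of_pos h2 _
    have ht : (0:ℝ) < r^2/4 := by positivity
    have hB : 0 < bf ν (r^2/4) := bf_pos hν0.le ht.le
    rw [besselI_eq hr, besselI_eq hr]
    have hsplit : (r/2:ℝ) ^ ν = (r/2) * (r/2) ^ (ν - 1) := by
      have h := Real.rpow_add h2 1 (ν - 1)
      rw [Real.rpow_one] at h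
      rw [show (1:ℝ) + (ν - 1) = ν by ring] at h
      exact h
    rw [hsplit]
    field_simp
  constructor
  · intro r1 h1 r2 h2 hlt
    simp only [mem_Ioi] at h1 h2
    simp only
    rw [hform r1 h1, hform r2 h2]
    have hs : (0:ℝ) < r1^2/4 := by positivity
    have hst : r1^2/4 < r2^2/4 := by nlinarith
    have hkey := key_ineq hν1 hs hst
    have hB1 : 0 < bf ν (r1^2/4) := bf_pos hν0.le hs.le
    have hB2 : 0 < bf ν (r2^2/4) := bf_pos hν0.le (by positivity : (0:ℝ) ≤ r2^2/4)
    rw [div_lt_div_iff₀ hB1 hB2]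
    nlinarith
  · have hcomp : Tendsto (fun r : ℝ => r^2/4) (nhdsWithin 0 (Ioi 0)) (nhdsWithin 0 (Ioi (0:ℝ))) := by
      rw [tendsto_nhdsWithin_iff]
      constructor
      · have : Tendsto (fun r : ℝ => r^2/4) (nhds 0) (nhds ((0:ℝ)^2/4)) :=
          ((continuous_pow 2).div_const 4).tendsto 0
        simpa using this.mono_left nhdsWithin_le_nhds
      · filter_upwards [self_mem_nhdsWithin] with r hr
        simp only [mem_Ioi] at hr ⊢
        positivity
    have hA := (bf_tendsto hνm).comp hcomp
    have hB := (bf_tendsto hν0.le).comp hcomp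
    have hb0 : (0:ℝ) < bc ν 0 := bc_pos hν0.le 0
    have hlim : Tendsto (fun r : ℝ => 2 * bf (ν - 1) (r^2/4) / bf ν (r^2/4))
        (nhdsWithin 0 (Ioi 0)) (nhds (2 * bc (ν - 1) 0 / bc ν 0)) :=
      (tendsto_const_nhds.mul hA).div hB hb0.ne'
    have hval : 2 * bc (ν - 1) 0 / bc ν 0 = (N : ℝ) := by
      have hG : (0:ℝ) < Real.Gamma ν := Real.Gamma_pos_of_pos hν0
      have e1 : ((0:ℕ):ℝ) + (ν - 1) + 1 = ν := by push_cast; ring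
      have e2 : ((0:ℕ):ℝ) + ν + 1 = ν + 1 := by push_cast; ring
      unfold bc
      rw [e1, e2, Real.Gamma_add_one hν0.ne']
      simp only [Nat.factorial_zero, Nat.cast_one, one_mul]
      rw [hν]
      field_simp
    rw [hval] at hlim
    apply hlim.congr'
    filter_upwards [self_mem_nhdsWithin] with r hr
    exact (hform r hr).symm
end

section
/- For any integer N ≥ 2 and any β > N, the equation b = β · I_{N/2}(b)/I_{N/2-1}(b) has a unique strictly positive solution b, and this solution tends to 0 as β ↓ N. -/
open MeasureTheory Real Filter Asymptotics Set

namespace Stmt4Aux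

noncomputable def co (ν : ℝ) (m : ℕ) : ℝ := 1 / (m.factorial * Real.Gamma (m + ν))

lemma co_pos {ν : ℝ} (hν : 0 < ν) (m : ℕ) : 0 < co ν m := by
  have h1 : (0:ℝ) < m.factorial := by exact_mod_cast m.factorial_pos
  have h2 : 0 < Real.Gamma ((m:ℝ) + ν) := Real.Gamma_pos_of_pos (by positivity)
  unfold co; positivity

lemma co_succ {ν : ℝ} (hν : 0 < ν) (m : ℕ) : co (ν+1) m * ((m:ℝ) + ν) = co ν m := by
  have h2 : 0 < Real.Gamma ((m:ℝ) + ν) := Real.Gamma_pos_of_pos (by positivity)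
  have h1 : (0:ℝ) < m.factorial := by exact_mod_cast m.factorial_pos
  have hmn : ((m:ℝ) + ν) ≠ 0 := by positivity
  have hg : Real.Gamma ((m:ℝ) + (ν+1)) = ((m:ℝ)+ν) * Real.Gamma ((m:ℝ)+ν) := by
    rw [show (m:ℝ) + (ν+1) = ((m:ℝ)+ν) + 1 by ring, Real.Gamma_add_one hmn]
  unfold co
  rw [hg]
  field_simp

lemma summable_co {ν : ℝ} (hν : 0 < ν) (t : ℝ) :
    Summable (fun m : ℕ => co ν m * t ^ m) := by
  apply summable_of_ratio_norm_eventually_le (r := 1/2) (by norm_num)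
  filter_upwards [Filter.eventually_ge_atTop (⌈2 * |t|⌉₊ + 1)] with m hm
  have hm' : 2 * |t| ≤ (m:ℝ) := by
    calc 2*|t| ≤ (⌈2*|t|⌉₊ : ℝ) := Nat.le_ceil _
    _ ≤ (m:ℝ) := by exact_mod_cast Nat.le_of_succ_le hm
  have hc := co_pos hν
  have hmn : ((m:ℝ) + ν) ≠ 0 := by positivity
  have h1 : (0:ℝ) < m.factorial := by exact_mod_cast m.factorial_pos
  have h2 : 0 < Real.Gamma ((m:ℝ) + ν) := Real.Gamma_pos_of_pos (by positivity)
  have hrec : co ν (m+1) = co ν m / (((m:ℝ)+1) * ((m:ℝ)+ν)) := by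
    unfold co
    rw [Nat.factorial_succ, show ((m+1:ℕ):ℝ) + ν = ((m:ℝ)+ν)+1 by push_cast; ring,
        Real.Gamma_add_one hmn]
    push_cast
    field_simp
  have hD : 0 < ((m:ℝ)+1)*((m:ℝ)+ν) := by positivity
  have hDt : 2*|t| ≤ ((m:ℝ)+1)*((m:ℝ)+ν) := by nlinarith [abs_nonneg t]
  rw [Real.norm_eq_abs, Real.norm_eq_abs, abs_mul, abs_mul, abs_pow, abs_pow,
      abs_of_pos (hc _), abs_of_pos (hc _), hrec, pow_succ, div_mul_eq_mul_div,
      div_le_iff₀ hD]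
  have := hc m
  have h3 : (0:ℝ) ≤ |t|^m := by positivity
  nlinarith [mul_le_mul_of_nonneg_left hDt (mul_nonneg (hc m).le h3)]


noncomputable def ser (ν t : ℝ) : ℝ := ∑' m : ℕ, co ν m * t ^ m

noncomputable def Fc (ν β t : ℝ) : ℝ := ∑' m : ℕ, (2 * co ν m - β * co (ν+1) m) * t ^ m

lemma summable_fc {ν : ℝ} (hν : 0 < ν) (β t : ℝ) :
    Summable (fun m : ℕ => (2 * co ν m - β * co (ν+1) m) * t ^ m) := by
  have h := ((summable_co hν t).mul_left 2).sub (((summable_co (by linarith : (0:ℝ) < ν+1) t)).mul_left β)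
  convert h using 2 with m
  case e'_3 => rfl
  ring

lemma Fc_eq {ν : ℝ} (hν : 0 < ν) (β t : ℝ) :
    Fc ν β t = 2 * ser ν t - β * ser (ν+1) t := by
  unfold Fc ser
  rw [← tsum_mul_left, ← tsum_mul_left,
      ← Summable.tsum_sub ((summable_co hν t).mul_left 2)
        ((summable_co (by linarith : (0:ℝ) < ν+1) t).mul_left β)]
  congr 1; ext m; ring

lemma cc {ν : ℝ} (hν : 0 < ν) (β : ℝ) (m : ℕ) :
    2 * co ν m - β * co (ν+1) m = co (ν+1) m * (2*((m:ℝ)+ν) - β) := by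
  rw [← co_succ hν m]; ring

lemma ser_pos {ν : ℝ} (hν : 0 < ν) {t : ℝ} (ht : 0 ≤ t) : 0 < ser ν t := by
  refine Summable.tsum_pos (summable_co hν t) (fun m => mul_nonneg (co_pos hν m).le (pow_nonneg ht m)) 0 ?_
  simpa using co_pos hν 0

lemma key {ν β t s : ℝ} (hν : 0 < ν) (hβ : 2*ν < β) (ht : 0 < t) (hts : t < s)
    (hF : 0 ≤ Fc ν β t) : 0 < Fc ν β s := by
  set K : ℕ := ⌈(β - 2*ν)/2⌉₊ with hK
  have hx : 0 < (β - 2*ν)/2 := by linarith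
  have hK1 : 1 ≤ K := Nat.ceil_pos.mpr hx
  set r : ℝ := s / t with hr
  have hr1 : 1 < r := (one_lt_div ht).mpr hts
  have hst : s = t * r := by rw [hr, mul_comm, div_mul_cancel₀ _ (ne_of_gt ht)]
  have hsum_t := summable_fc hν β t
  have hsum_s := summable_fc hν β s
  have hle : ∀ m : ℕ, r ^ K * ((2 * co ν m - β * co (ν+1) m) * t ^ m)
      ≤ (2 * co ν m - β * co (ν+1) m) * s ^ m := by
    intro m
    rw [hst, mul_pow, cc hν β m]
    set d : ℝ := co (ν+1) m * (2*((m:ℝ)+ν) - β) * t ^ m with hd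
    have hco := co_pos (by linarith : (0:ℝ) < ν+1) m
    have htm : (0:ℝ) < t ^ m := by positivity
    rcases le_or_gt K m with h | h
    · have hd0 : 0 ≤ d := by
        have : (β - 2*ν)/2 ≤ (m:ℝ) := le_trans (Nat.le_ceil _) (by exact_mod_cast h)
        have : 0 ≤ 2*((m:ℝ)+ν) - β := by linarith
        positivity
      calc r ^ K * d ≤ r ^ m * d :=
            mul_le_mul_of_nonneg_right (pow_le_pow_right₀ hr1.le h) hd0
        _ = d * r ^ m := by ring
        _ = co (ν+1) m * (2*((m:ℝ)+ν) - β) * (t ^ m * r ^ m) := by rw [hd]; ring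
    · have hd0 : d ≤ 0 := by
        have h1 : (m:ℝ) < (β - 2*ν)/2 := by exact_mod_cast Nat.lt_ceil.mp h
        have h2 : 2*((m:ℝ)+ν) - β ≤ 0 := by linarith
        have := mul_nonpos_of_nonpos_of_nonneg
          (mul_nonpos_of_nonneg_of_nonpos hco.le h2) htm.le
        simpa [hd, mul_assoc] using this
      calc r ^ K * d ≤ r ^ m * d := by
            apply mul_le_mul_of_nonpos_right ?_ hd0
            exact pow_le_pow_right₀ hr1.le h.le
        _ = co (ν+1) m * (2*((m:ℝ)+ν) - β) * (t ^ m * r ^ m) := by rw [hd]; ring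
  have hstrict : r ^ K * ((2 * co ν 0 - β * co (ν+1) 0) * t ^ 0)
      < (2 * co ν 0 - β * co (ν+1) 0) * s ^ 0 := by
    rw [cc hν β 0]
    have hco := co_pos (by linarith : (0:ℝ) < ν+1) 0
    have hd0 : co (ν+1) 0 * (2*((0:ℕ):ℝ)+2*ν - β) < 0 := by
      apply mul_neg_of_pos_of_neg hco
      push_cast; linarith
    have h1 : (1:ℝ) < r ^ K := one_lt_pow₀ hr1 (by omega)
    push_cast at hd0 ⊢
    nlinarith
  have hlt : ∑' m : ℕ, r ^ K * ((2 * co ν m - β * co (ν+1) m) * t ^ m)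
      < ∑' m : ℕ, (2 * co ν m - β * co (ν+1) m) * s ^ m := by
    exact Summable.tsum_lt_tsum hle (i := 0) hstrict (hsum_t.mul_left _) hsum_s
  have : ∑' m : ℕ, r ^ K * ((2 * co ν m - β * co (ν+1) m) * t ^ m) = r ^ K * Fc ν β t := by
    rw [tsum_mul_left]; rfl
  rw [this] at hlt
  have h0 : 0 ≤ r ^ K * Fc ν β t := mul_nonneg (by positivity) hF
  exact lt_of_le_of_lt h0 hlt


lemma Fc_zero {ν : ℝ} (hν : 0 < ν) {β : ℝ} (hβ : 2*ν < β) : Fc ν β 0 < 0 := by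
  unfold Fc
  rw [tsum_eq_single 0 (fun m hm => by simp [zero_pow hm])]
  rw [pow_zero, mul_one, cc hν β 0]
  apply mul_neg_of_pos_of_neg (co_pos (by linarith) 0)
  push_cast; linarith

lemma exists_root {ν β : ℝ} (hν : 0 < ν) (hβ : 2*ν < β) : ∃ t, 0 < t ∧ Fc ν β t = 0 := by
  set c : ℕ → ℝ := fun m => 2 * co ν m - β * co (ν+1) m with hc
  set K : ℕ := ⌈(β - 2*ν)/2⌉₊ + 1 with hKdef
  have hcK : 0 < c K := by
    show 0 < 2 * co ν K - β * co (ν+1) K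
    rw [cc hν β K]
    apply mul_pos (co_pos (by linarith) K)
    have h1 : (β - 2*ν)/2 ≤ (⌈(β - 2*ν)/2⌉₊ : ℝ) := Nat.le_ceil _
    have hK' : ((⌈(β - 2*ν)/2⌉₊:ℕ):ℝ) < (K:ℝ) := by exact_mod_cast Nat.lt_succ_self _
    linarith
  set C : ℝ := ∑ m ∈ Finset.range K, |c m| with hC
  have hC0 : 0 ≤ C := Finset.sum_nonneg (fun m _ => abs_nonneg _)
  set T : ℝ := max 1 ((C+1)/(c K)) with hT
  have hT1 : 1 ≤ T := le_max_left _ _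
  have hT0 : 0 < T := lt_of_lt_of_le one_pos hT1
  have hTc : C + 1 ≤ c K * T := by
    have h := le_max_right 1 ((C+1)/(c K))
    calc C + 1 = c K * ((C+1)/(c K)) := by field_simp
      _ ≤ c K * T := mul_le_mul_of_nonneg_left h hcK.le
  have hcnn : ∀ m : ℕ, K ≤ m → 0 ≤ c m := by
    intro m hm
    show 0 ≤ 2 * co ν m - β * co (ν+1) m
    rw [cc hν β m]
    apply mul_nonneg (co_pos (by linarith) m).le
    have h1 : (β - 2*ν)/2 ≤ (m:ℝ) := by
      have : ⌈(β - 2*ν)/2⌉₊ ≤ m := by omega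
      exact (Nat.ceil_le.mp this)
    linarith
  -- Fc at T is positive
  have hFT : 0 < Fc ν β T := by
    have h1 : ∑ m ∈ Finset.range (K+1), c m * T^m ≤ Fc ν β T := by
      apply Summable.sum_le_tsum _ _ (summable_fc hν β T)
      intro m hm
      have hm' : K + 1 ≤ m := by simpa [Finset.mem_range, not_lt] using hm
      exact mul_nonneg (hcnn m (by omega)) (by positivity)
    have h2 : ∑ m ∈ Finset.range (K+1), c m * T^m
        = (∑ m ∈ Finset.range K, c m * T^m) + c K * T^K := Finset.sum_range_succ _ _
    have h3 : |∑ m ∈ Finset.range K, c m * T^m| ≤ C * T^(K-1) := by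
      calc |∑ m ∈ Finset.range K, c m * T^m| ≤ ∑ m ∈ Finset.range K, |c m * T^m| :=
            Finset.abs_sum_le_sum_abs _ _
        _ ≤ ∑ m ∈ Finset.range K, |c m| * T^(K-1) := by
            apply Finset.sum_le_sum
            intro m hm
            rw [abs_mul, abs_pow, abs_of_pos hT0]
            apply mul_le_mul_of_nonneg_left _ (abs_nonneg _)
            exact pow_le_pow_right₀ hT1 (by simp [Finset.mem_range] at hm; omega)
        _ = C * T^(K-1) := by rw [hC, Finset.sum_mul]
    have h4 : c K * T^K = (c K * T) * T^(K-1) := by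
      have hKK : T^K = T^(K-1) * T := by
        conv_lhs => rw [show K = (K-1)+1 by omega]
        rw [pow_succ]
      rw [hKK]; ring
    have h5 : (0:ℝ) < T^(K-1) := by positivity
    have h6 := (abs_le.mp h3).1
    have h7 : (C+1) * T^(K-1) ≤ (c K * T) * T^(K-1) :=
      mul_le_mul_of_nonneg_right hTc h5.le
    calc (0:ℝ) < T^(K-1) := h5
      _ = -(C * T^(K-1)) + (C+1) * T^(K-1) := by ring
      _ ≤ (∑ m ∈ Finset.range K, c m * T^m) + (c K * T) * T^(K-1) := add_le_add h6 h7
      _ = (∑ m ∈ Finset.range K, c m * T^m) + c K * T^K := by rw [h4]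
      _ = ∑ m ∈ Finset.range (K+1), c m * T^m := h2.symm
      _ ≤ Fc ν β T := h1
  -- continuity via clamping
  set cl : ℝ → ℝ := fun u => max 0 (min u T) with hcl
  have hcl_cont : Continuous cl := continuous_const.max (continuous_id.min continuous_const)
  have hcl_mem : ∀ u, 0 ≤ cl u ∧ cl u ≤ T := fun u =>
    ⟨le_max_left _ _, max_le hT0.le (min_le_right _ _)⟩
  have hcl_eq : ∀ u, 0 ≤ u → u ≤ T → cl u = u := by
    intro u h0 h1
    simp [hcl, min_eq_left h1, max_eq_right h0]
  set g : ℝ → ℝ := fun u => ∑' m : ℕ, c m * (cl u)^m with hg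
  have hg_cont : Continuous g := by
    apply continuous_tsum (u := fun m => |c m| * T^m)
      (fun m => continuous_const.mul (hcl_cont.pow m))
    · have := (summable_fc hν β T).abs
      apply this.congr
      intro m
      rw [abs_mul, abs_pow, abs_of_pos hT0]
    · intro m u
      simp only [Real.norm_eq_abs, Pi.mul_apply, Pi.pow_apply]
      rw [abs_mul, abs_pow, abs_of_nonneg (hcl_mem u).1]
      exact mul_le_mul_of_nonneg_left
        (pow_le_pow_left₀ (hcl_mem u).1 (hcl_mem u).2 m) (abs_nonneg _)
  have hg0 : g 0 = Fc ν β 0 := by rw [hg]; simp only; rw [hcl_eq 0 le_rfl hT0.le]; rfl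
  have hgT : g T = Fc ν β T := by rw [hg]; simp only; rw [hcl_eq T hT0.le le_rfl]; rfl
  have hmem : (0:ℝ) ∈ Icc (g 0) (g T) := by
    rw [hg0, hgT]
    exact ⟨(Fc_zero hν hβ).le, hFT.le⟩
  obtain ⟨t, htmem, hgt⟩ := intermediate_value_Icc hT0.le hg_cont.continuousOn hmem
  refine ⟨t, ?_, ?_⟩
  · rcases lt_or_eq_of_le htmem.1 with h | h
    · exact h
    · exfalso
      rw [← h] at hgt
      rw [hg0] at hgt
      exact absurd hgt (Fc_zero hν hβ).ne
  · rw [← hgt, hg]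
    simp only
    rw [hcl_eq t htmem.1 htmem.2]
    rfl


lemma besselI_eq (nu : ℝ) {b : ℝ} (hb : 0 < b) :
    besselI nu b = (b/2)^nu * ser (nu+1) ((b/2)^2) := by
  have hx : 0 < b/2 := by linarith
  unfold besselI ser
  rw [← tsum_mul_left]
  congr 1
  ext m
  rw [Real.rpow_add hx, show (2*(m:ℝ)) = ((2*m:ℕ):ℝ) by push_cast; ring,
      Real.rpow_natCast, pow_mul]
  unfold co
  rw [show (m:ℝ)+(nu+1) = (m:ℝ)+nu+1 by ring, div_eq_mul_inv, one_div]
  ring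

lemma eqn_iff {ν : ℝ} (hν : 1 ≤ ν) {β b : ℝ} (hb : 0 < b) :
    b = β * (besselI ν b / besselI (ν-1) b) ↔ Fc ν β ((b/2)^2) = 0 := by
  have hν0 : (0:ℝ) < ν := by linarith
  have hx : 0 < b/2 := by linarith
  set x : ℝ := b/2 with hxdef
  set t : ℝ := x^2 with htdef
  have ht : 0 < t := by positivity
  have hA : besselI ν b = x^ν * ser (ν+1) t := besselI_eq ν hb
  have hB : besselI (ν-1) b = x^(ν-1) * ser ν t := by
    rw [besselI_eq (ν-1) hb, show ν-1+1 = ν by ring]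
  have hS0 : 0 < ser ν t := ser_pos hν0 ht.le
  have hSp : 0 < ser (ν+1) t := ser_pos (by linarith) ht.le
  have hx1 : x^(ν-1) ≠ 0 := (Real.rpow_pos_of_pos hx _).ne'
  have hxsplit : x ^ ν = x ^ (ν-1) * x := by
    conv_lhs => rw [show ν = (ν-1)+1 by ring]
    rw [Real.rpow_add hx, Real.rpow_one]
  rw [hA, hB, hxsplit, Fc_eq hν0 β t]
  rw [show x^(ν-1) * x * ser (ν+1) t = x^(ν-1) * (x * ser (ν+1) t) by ring,
      mul_div_mul_left _ _ hx1]
  constructor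
  · intro h
    have h2 : b * ser ν t = β * (x * ser (ν+1) t) := by
      rw [h]; field_simp
    have hb2 : b = 2*x := by rw [hxdef]; ring
    rw [hb2] at h2
    have h3 : x * (2 * ser ν t) = x * (β * ser (ν+1) t) := by ring_nf; ring_nf at h2; linarith
    have := mul_left_cancel₀ hx.ne' h3
    linarith
  · intro h
    have h4 : β * (x * ser (ν+1) t / ser ν t) = 2*x := by
      rw [show β * (x * ser (ν+1) t / ser ν t) = x * (β * ser (ν+1) t) / ser ν t by ring,
          show β * ser (ν+1) t = 2 * ser ν t by linarith]
      field_simp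
    rw [h4, hxdef]
    ring


end Stmt4Aux

open Stmt4Aux

theorem stmt_4 (N : ℕ) (hN : 2 ≤ N) :
    (∀ β : ℝ, (N : ℝ) < β →
      ∃! b : ℝ, 0 < b ∧ b = β * (besselI ((N : ℝ) / 2) b / besselI ((N : ℝ) / 2 - 1) b)) ∧
    ∀ sol : ℝ → ℝ,
      (∀ β : ℝ, (N : ℝ) < β → 0 < sol β ∧
        sol β = β * (besselI ((N : ℝ) / 2) (sol β) / besselI ((N : ℝ) / 2 - 1) (sol β))) →
      Filter.Tendsto sol (nhdsWithin (N : ℝ) (Set.Ioi (N : ℝ))) (nhds 0) := by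
  have hN2 : (2:ℝ) ≤ (N:ℝ) := by exact_mod_cast hN
  set ν : ℝ := (N:ℝ)/2 with hνdef
  have hν1 : 1 ≤ ν := by rw [hνdef]; linarith
  have hν0 : 0 < ν := by linarith
  have hνN : 2*ν = (N:ℝ) := by rw [hνdef]; ring
  constructor
  · intro β hβ
    have hβν : 2*ν < β := by rw [hνN]; exact hβ
    obtain ⟨t, ht0, htroot⟩ := exists_root hν0 hβν
    have hsq : 0 < Real.sqrt t := Real.sqrt_pos.mpr ht0
    refine ⟨2*Real.sqrt t, ⟨by linarith, ?_⟩, ?_⟩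
    · apply (eqn_iff hν1 (by linarith)).mpr
      have h1 : (2*Real.sqrt t)/2 = Real.sqrt t := by ring
      rw [h1, Real.sq_sqrt ht0.le]
      exact htroot
    · rintro b ⟨hb0, hbeq⟩
      have h1 : Fc ν β ((b/2)^2) = 0 := (eqn_iff hν1 hb0).mp hbeq
      have hu0 : 0 < (b/2)^2 := by positivity
      have hut : (b/2)^2 = t := by
        rcases lt_trichotomy ((b/2)^2) t with h | h | h
        · exact absurd htroot (key hν0 hβν hu0 h h1.ge).ne'
        · exact h
        · exact absurd h1 (key hν0 hβν ht0 h htroot.ge).ne'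
      have h2 : b/2 = Real.sqrt t := by
        rw [← hut, Real.sqrt_sq (by linarith)]
      linarith
  · intro sol hsol
    rw [Metric.tendsto_nhds]
    intro ε hε
    set δ : ℝ := (ε/2)^2 with hδdef
    have hδ0 : 0 < δ := by positivity
    have hS0 : 0 < ser ν δ := ser_pos hν0 hδ0.le
    have hSp : 0 < ser (ν+1) δ := ser_pos (by linarith) hδ0.le
    have hδpos : 0 < Fc ν (2*ν) δ := by
      apply Summable.tsum_pos (summable_fc hν0 (2*ν) δ) _ 1
      · rw [cc hν0 (2*ν) 1]
        have := co_pos (show (0:ℝ) < ν+1 by linarith) 1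
        push_cast
        nlinarith
      · intro m
        rw [cc hν0 (2*ν) m]
        have h1 := co_pos (show (0:ℝ) < ν+1 by linarith) m
        have h2 : (0:ℝ) ≤ 2*((m:ℝ)+ν) - 2*ν := by
          have : (0:ℝ) ≤ (m:ℝ) := Nat.cast_nonneg m
          linarith
        positivity
    set β₀ : ℝ := 2 * ser ν δ / ser (ν+1) δ with hβ₀def
    have hβ₀ : (N:ℝ) < β₀ := by
      rw [hβ₀def, lt_div_iff₀ hSp]
      have h3 := Fc_eq hν0 (2*ν) δ
      rw [h3] at hδpos
      rw [← hνN]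
      linarith
    filter_upwards [Ioo_mem_nhdsGT_of_mem (left_mem_Ico.mpr hβ₀)] with β hβmem
    obtain ⟨hβl, hβu⟩ := hβmem
    obtain ⟨hsolpos, hsoleq⟩ := hsol β hβl
    have hβν : 2*ν < β := by rw [hνN]; exact hβl
    have h1 : Fc ν β ((sol β/2)^2) = 0 := (eqn_iff hν1 hsolpos).mp hsoleq
    have hFβδ : 0 < Fc ν β δ := by
      rw [Fc_eq hν0]
      have h4 : β * ser (ν+1) δ < 2 * ser ν δ := by
        have := (lt_div_iff₀ hSp).mp hβu
        linarith
      linarith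
    have hu0 : 0 < (sol β/2)^2 := by positivity
    have huδ : (sol β/2)^2 < δ := by
      rcases lt_trichotomy ((sol β/2)^2) δ with h | h | h
      · exact h
      · rw [h] at h1; linarith
      · exact absurd h1 (key hν0 hβν hδ0 h hFβδ.le).ne'
    have hfin : sol β / 2 < ε/2 := by
      nlinarith [hδdef ▸ huδ]
    rw [Real.dist_eq, sub_zero, abs_of_pos hsolpos]
    linarith
end

section
/- For an integer N ≥ 2 and c ∈ ℝ, ∫_{-1}^1 u·e^{cu}(1-u²)^{(N-3)/2} du / ∫_{-1}^1 e^{cu}(1-u²)^{(N-3)/2} du = I_{N/2}(c)/I_{N/2-1}(c) for c > 0. -/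
open MeasureTheory Real Filter Asymptotics Set

lemma realBeta_integrableOn {a b : ℝ} (ha : 0 < a) (hb : 0 < b) :
    IntegrableOn (fun x : ℝ => x ^ (a - 1) * (1 - x) ^ (b - 1)) (Ioo 0 1) := by
  have h := (Complex.betaIntegral_convergent (u := (a : ℂ)) (v := (b : ℂ)) (by simpa) (by simpa))
  have h2 : IntegrableOn (fun x : ℝ => ‖(x : ℂ) ^ ((a : ℂ) - 1) * ((1 : ℂ) - x) ^ ((b : ℂ) - 1)‖)
      (Ioo 0 1) :=
    IntegrableOn.mono_set (h.1.norm) Ioo_subset_Ioc_self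
  refine h2.congr_fun (fun x hx => ?_) measurableSet_Ioo
  have hx0 : (0:ℝ) < x := hx.1
  have hx1 : (0:ℝ) < 1 - x := by linarith [hx.2]
  show ‖_‖ = _
  rw [norm_mul,
    Complex.norm_cpow_eq_rpow_re_of_pos (by exact_mod_cast hx0)]
  have : ((1:ℂ) - (x:ℝ)) = ((1 - x : ℝ) : ℂ) := by push_cast; ring
  rw [this, Complex.norm_cpow_eq_rpow_re_of_pos (by exact_mod_cast hx1)]
  norm_num

lemma realBeta_eq {a b : ℝ} (ha : 0 < a) (hb : 0 < b) :
    ∫ x in Ioo (0:ℝ) 1, x ^ (a - 1) * (1 - x) ^ (b - 1)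
      = Real.Gamma a * Real.Gamma b / Real.Gamma (a + b) := by
  have key := Complex.Gamma_mul_Gamma_eq_betaIntegral (s := (a:ℂ)) (t := (b:ℂ))
    (by simpa) (by simpa)
  have hBeta : Complex.betaIntegral a b
      = ((∫ x in Ioo (0:ℝ) 1, x ^ (a - 1) * (1 - x) ^ (b - 1) : ℝ) : ℂ) := by
    rw [Complex.betaIntegral, intervalIntegral.integral_of_le zero_le_one,
      integral_Ioc_eq_integral_Ioo]
    rw [show ((∫ x in Ioo (0:ℝ) 1, x ^ (a - 1) * (1 - x) ^ (b - 1) : ℝ) : ℂ)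
        = ∫ x in Ioo (0:ℝ) 1, ((x ^ (a - 1) * (1 - x) ^ (b - 1) : ℝ) : ℂ) from
      (integral_ofReal (𝕜 := ℂ)).symm]
    refine setIntegral_congr_fun measurableSet_Ioo (fun x hx => ?_)
    have hx0 : (0:ℝ) ≤ x := hx.1.le
    have hx1 : (0:ℝ) ≤ 1 - x := by linarith [hx.2.le]
    rw [Complex.ofReal_mul, Complex.ofReal_cpow hx0, Complex.ofReal_cpow hx1]
    push_cast
    ring
  rw [hBeta, ← Complex.ofReal_add, Complex.Gamma_ofReal, Complex.Gamma_ofReal,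
    Complex.Gamma_ofReal, ← Complex.ofReal_mul, ← Complex.ofReal_mul] at key
  have := Complex.ofReal_injective key
  have hG : Real.Gamma (a + b) ≠ 0 := (Real.Gamma_pos_of_pos (by linarith)).ne'
  field_simp [this]
  linear_combination -this

lemma gamma_nat_add_half (m : ℕ) :
    Real.Gamma ((m : ℝ) + 1/2) = Real.sqrt π * (2*m).factorial / (4 ^ m * m.factorial) := by
  induction m with
  | zero => simpa using Real.Gamma_one_half_eq
  | succ n ih =>
    have h : ((n : ℝ) + 1) + 1/2 = ((n : ℝ) + 1/2) + 1 := by ring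
    rw [Nat.cast_succ, h, Real.Gamma_add_one (by positivity), ih]
    have h2 : (2 * (n+1)).factorial = (2*n+2) * ((2*n+1) * (2*n).factorial) := by
      rw [show 2*(n+1) = (2*n+1)+1 by ring, Nat.factorial_succ, Nat.factorial_succ]
    rw [h2]
    push_cast [Nat.factorial_succ]
    field_simp
    ring

lemma sq_image_Ioo : (fun t : ℝ => t ^ 2) '' Ioo 0 1 = Ioo 0 1 := by
  ext x
  constructor
  · rintro ⟨t, ⟨ht0, ht1⟩, rfl⟩
    refine ⟨by positivity, ?_⟩
    show t ^ 2 < 1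
    nlinarith
  · rintro ⟨hx0, hx1⟩
    exact ⟨Real.sqrt x, ⟨Real.sqrt_pos.2 hx0, by
      rw [show (1:ℝ) = Real.sqrt 1 by simp]; exact Real.sqrt_lt_sqrt hx0.le hx1⟩,
      Real.sq_sqrt hx0.le⟩

lemma sq_hasDeriv : ∀ t ∈ Ioo (0:ℝ) 1, HasDerivWithinAt (fun t : ℝ => t ^ 2) (2*t) (Ioo 0 1) t :=
  fun t _ => by simpa using (hasDerivAt_pow 2 t).hasDerivWithinAt

lemma sq_injOn : InjOn (fun t : ℝ => t ^ 2) (Ioo 0 1) := fun x hx y hy h => by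
  have h' : x ^ 2 = y ^ 2 := h
  nlinarith [hx.1, hy.1]

lemma moment_cov {α : ℝ} (m : ℕ) :
    ∫ x in Ioo (0:ℝ) 1, x ^ ((m:ℝ) + 1/2 - 1) * (1 - x) ^ ((α+1) - 1)
      = ∫ t in Ioo (0:ℝ) 1, |2*t| • ((t^2) ^ ((m:ℝ) + 1/2 - 1) * (1 - t^2) ^ ((α+1) - 1)) := by
  have := integral_image_eq_integral_abs_deriv_smul (f := fun t : ℝ => t ^ 2)
    (f' := fun t : ℝ => 2*t) measurableSet_Ioo sq_hasDeriv sq_injOn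
    (fun x : ℝ => x ^ ((m:ℝ) + 1/2 - 1) * (1 - x) ^ ((α+1) - 1))
  rw [sq_image_Ioo] at this
  exact this

lemma moment_integrand_eq {α : ℝ} (m : ℕ) {t : ℝ} (ht : t ∈ Ioo (0:ℝ) 1) :
    |2*t| • ((t^2) ^ ((m:ℝ) + 1/2 - 1) * (1 - t^2) ^ ((α+1) - 1))
      = 2 * (t ^ (2*m) * (1 - t^2) ^ α) := by
  obtain ⟨ht0, ht1⟩ := ht
  have h1 : (t^2) ^ ((m:ℝ) + 1/2 - 1) = t ^ (2*(m:ℝ) - 1) := by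
    rw [← Real.rpow_natCast t 2, ← Real.rpow_mul ht0.le]
    norm_num
    ring_nf
  have h2 : |2*t| = 2*t := abs_of_pos (by linarith)
  rw [h1, h2, smul_eq_mul]
  have h4 : t * t ^ (2*(m:ℝ)-1) = t ^ (2*m) := by
    rw [← Real.rpow_natCast t (2*m),
      show t * t ^ (2*(m:ℝ)-1) = t^(1:ℝ) * t^(2*(m:ℝ)-1) by rw [Real.rpow_one],
      ← Real.rpow_add ht0]
    push_cast
    ring_nf
  have h3 : 2*t*(t ^ (2*(m:ℝ)-1) * (1-t^2)^((α+1)-1)) = 2*(t * t ^ (2*(m:ℝ)-1) * (1-t^2)^α) := by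
    ring_nf
  rw [h3, h4]

lemma neg_image_Ioo : (fun t : ℝ => -t) '' Ioo 0 1 = Ioo (-1) 0 := by
  ext x
  constructor
  · rintro ⟨t, ⟨ht0, ht1⟩, rfl⟩; exact ⟨by show (-1:ℝ) < -t; linarith, by show -t < (0:ℝ); linarith⟩
  · rintro ⟨hx0, hx1⟩; exact ⟨-x, ⟨by linarith, by linarith⟩, by ring⟩

lemma neg_hasDeriv : ∀ t ∈ Ioo (0:ℝ) 1, HasDerivWithinAt (fun t : ℝ => -t) (-1) (Ioo 0 1) t :=
  fun t _ => (hasDerivAt_neg t).hasDerivWithinAt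

lemma neg_injOn : InjOn (fun t : ℝ => -t) (Ioo 0 1) := fun x _ y _ h => by
  simpa using neg_injective h

lemma reflect_integral (g : ℝ → ℝ) :
    ∫ x in Ioo (-1:ℝ) 0, g x = ∫ t in Ioo (0:ℝ) 1, g (-t) := by
  have := integral_image_eq_integral_abs_deriv_smul (f := fun t : ℝ => -t)
    (f' := fun _ : ℝ => (-1:ℝ)) measurableSet_Ioo neg_hasDeriv neg_injOn g
  rw [neg_image_Ioo] at this
  simpa using this

lemma reflect_integrableOn {g : ℝ → ℝ} (h : IntegrableOn (fun t => g (-t)) (Ioo 0 1)) :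
    IntegrableOn g (Ioo (-1) 0) := by
  have := (integrableOn_image_iff_integrableOn_abs_deriv_smul (f := fun t : ℝ => -t)
    (f' := fun _ : ℝ => (-1:ℝ)) measurableSet_Ioo neg_hasDeriv neg_injOn g)
  rw [neg_image_Ioo] at this
  rw [this]
  simpa using h


section Moments
variable {α : ℝ} (hα : -1 < α)

include hα in
lemma momentOn01 (m : ℕ) :
    ∫ t in Ioo (0:ℝ) 1, t ^ (2*m) * (1 - t^2) ^ α
      = Real.Gamma ((m:ℝ)+1/2) * Real.Gamma (α+1) / (2 * Real.Gamma ((m:ℝ)+1/2+(α+1))) := by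
  have ha : 0 < (m:ℝ)+1/2 := by positivity
  have hb : 0 < α+1 := by linarith
  have h1 := realBeta_eq ha hb
  rw [moment_cov, setIntegral_congr_fun measurableSet_Ioo
    (fun t ht => moment_integrand_eq m ht), integral_const_mul] at h1
  have hg : 0 < Real.Gamma ((m:ℝ)+1/2+(α+1)) := Real.Gamma_pos_of_pos (by positivity)
  field_simp at h1 ⊢
  linarith

include hα in
lemma momentInt01_even (m : ℕ) :
    IntegrableOn (fun t : ℝ => t ^ (2*m) * (1 - t^2) ^ α) (Ioo 0 1) := by
  have ha : 0 < (m:ℝ)+1/2 := by positivity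
  have hb : 0 < α+1 := by linarith
  have h0 := realBeta_integrableOn ha hb
  rw [← sq_image_Ioo] at h0
  have h1 := (integrableOn_image_iff_integrableOn_abs_deriv_smul
    measurableSet_Ioo sq_hasDeriv sq_injOn _).mp h0
  have h2 : IntegrableOn (fun t : ℝ => 2 * (t ^ (2*m) * (1 - t^2) ^ α)) (Ioo 0 1) :=
    h1.congr_fun (fun t ht => moment_integrand_eq m ht) measurableSet_Ioo
  simpa [IntegrableOn] using h2.const_mul 2⁻¹

include hα in
lemma baseInt01 : IntegrableOn (fun t : ℝ => (1 - t^2) ^ α) (Ioo 0 1) := by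
  have := momentInt01_even hα 0
  simpa using this

lemma meas_f (n : ℕ) : Measurable (fun t : ℝ => t ^ n * (1 - t^2) ^ α) := by
  fun_prop

include hα in
lemma momentInt01 (n : ℕ) :
    IntegrableOn (fun t : ℝ => t ^ n * (1 - t^2) ^ α) (Ioo 0 1) := by
  refine (baseInt01 hα).mono' (meas_f n).aestronglyMeasurable ?_
  refine (ae_restrict_iff' measurableSet_Ioo).2 (ae_of_all _ fun t ht => ?_)
  obtain ⟨ht0, ht1⟩ := ht
  have hb : (0:ℝ) ≤ 1 - t^2 := by nlinarith
  rw [norm_mul, norm_pow, Real.norm_eq_abs, Real.norm_eq_abs,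
    abs_of_nonneg (Real.rpow_nonneg hb α), abs_of_pos ht0]
  calc t ^ n * (1-t^2)^α ≤ 1 * (1-t^2)^α := by
        apply mul_le_mul_of_nonneg_right (pow_le_one₀ ht0.le ht1.le)
          (Real.rpow_nonneg hb α)
    _ = (1-t^2)^α := one_mul _

lemma f_neg (n : ℕ) (t : ℝ) :
    (-t) ^ n * (1 - (-t)^2) ^ α = (-1:ℝ)^n * (t ^ n * (1 - t^2) ^ α) := by
  rw [neg_pow, neg_sq]
  ring

include hα in
lemma momentIntNeg (n : ℕ) :
    IntegrableOn (fun t : ℝ => t ^ n * (1 - t^2) ^ α) (Ioo (-1) 0) := by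
  refine reflect_integrableOn ?_
  have h3 : IntegrableOn (fun x : ℝ => (-1:ℝ)^n * (x ^ n * (1 - x^2) ^ α)) (Ioo 0 1) :=
    (momentInt01 hα n).const_mul ((-1:ℝ)^n)
  exact h3.congr_fun (fun t _ => (f_neg n t).symm) measurableSet_Ioo

include hα in
lemma momentInt (n : ℕ) :
    IntegrableOn (fun t : ℝ => t ^ n * (1 - t^2) ^ α) (Ioo (-1) 1) := by
  have h1 : IntegrableOn (fun t : ℝ => t ^ n * (1 - t^2) ^ α) (Ioc (-1) 0) :=
    (momentIntNeg hα n).congr_set_ae Ioo_ae_eq_Ioc.symm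
  have h2 : IntegrableOn (fun t : ℝ => t ^ n * (1 - t^2) ^ α) (Ioc 0 1) :=
    (momentInt01 hα n).congr_set_ae Ioo_ae_eq_Ioc.symm
  refine (h1.union h2).mono_set ?_
  rw [Ioc_union_Ioc_eq_Ioc (by norm_num) (by norm_num)]
  exact Ioo_subset_Ioc_self

include hα in
lemma J_split (n : ℕ) :
    ∫ t in Ioo (-1:ℝ) 1, t ^ n * (1 - t^2) ^ α
      = ((-1:ℝ)^n + 1) * ∫ t in Ioo (0:ℝ) 1, t ^ n * (1 - t^2) ^ α := by
  have h1 : IntegrableOn (fun t : ℝ => t ^ n * (1 - t^2) ^ α) (Ioc (-1) 0) :=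
    (momentIntNeg hα n).congr_set_ae Ioo_ae_eq_Ioc.symm
  have h2 : IntegrableOn (fun t : ℝ => t ^ n * (1 - t^2) ^ α) (Ioc 0 1) :=
    (momentInt01 hα n).congr_set_ae Ioo_ae_eq_Ioc.symm
  have hsplit : ∫ t in Ioo (-1:ℝ) 1, t ^ n * (1 - t^2) ^ α
      = (∫ t in Ioc (-1:ℝ) 0, t ^ n * (1 - t^2) ^ α)
        + ∫ t in Ioc (0:ℝ) 1, t ^ n * (1 - t^2) ^ α := by
    rw [← integral_Ioc_eq_integral_Ioo,
      ← Ioc_union_Ioc_eq_Ioc (show (-1:ℝ) ≤ 0 by norm_num) (show (0:ℝ) ≤ 1 by norm_num),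
      setIntegral_union (Ioc_disjoint_Ioc_of_le le_rfl) measurableSet_Ioc h1 h2]
  have hrefl : ∫ t in Ioc (-1:ℝ) 0, t ^ n * (1 - t^2) ^ α
      = (-1:ℝ)^n * ∫ t in Ioo (0:ℝ) 1, t ^ n * (1 - t^2) ^ α := by
    rw [integral_Ioc_eq_integral_Ioo, reflect_integral]
    simp_rw [f_neg (α := α) n]
    rw [integral_const_mul]
  rw [hsplit, hrefl, integral_Ioc_eq_integral_Ioo]
  ring

end Moments


section Series
variable {α : ℝ} (hα : -1 < α) (c : ℝ)

include hα in
lemma series_hasSum (k : ℕ) :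
    HasSum (fun n : ℕ => c^n / n.factorial * ∫ u in Ioo (-1:ℝ) 1, u^(n+k) * (1-u^2)^α)
      (∫ u in Ioo (-1:ℝ) 1, u^k * Real.exp (c*u) * (1-u^2)^α) := by
  set μ := volume.restrict (Ioo (-1:ℝ) 1) with hμ
  set F : ℕ → ℝ → ℝ := fun n u => c^n / n.factorial * (u^(n+k) * (1-u^2)^α) with hF
  have hFint : ∀ n, Integrable (F n) μ := fun n => (momentInt hα (n+k)).const_mul _
  set B : ℝ := ∫ u in Ioo (-1:ℝ) 1, (1-u^2)^α with hB
  have hnorm : ∀ n, (∫ u, ‖F n u‖ ∂μ) ≤ |c|^n / n.factorial * B := by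
    intro n
    have hle : ∀ᵐ u ∂μ, ‖F n u‖ ≤ |c|^n / n.factorial * (1-u^2)^α := by
      refine (ae_restrict_iff' measurableSet_Ioo).2 (ae_of_all _ fun u hu => ?_)
      obtain ⟨hu0, hu1⟩ := hu
      have hb : (0:ℝ) ≤ 1 - u^2 := by nlinarith
      have h1 : ‖F n u‖ = |c|^n / n.factorial * (|u|^(n+k) * (1-u^2)^α) := by
        rw [hF]
        simp only [norm_mul, norm_div, norm_pow, Real.norm_eq_abs, Nat.abs_cast,
          abs_of_nonneg (Real.rpow_nonneg hb α)]
      rw [h1]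
      have h2 : |u|^(n+k) ≤ 1 := pow_le_one₀ (abs_nonneg u) (abs_le.2 ⟨hu0.le, hu1.le⟩)
      have h3 : |u|^(n+k) * (1-u^2)^α ≤ 1 * (1-u^2)^α :=
        mul_le_mul_of_nonneg_right h2 (Real.rpow_nonneg hb α)
      have h4 : (0:ℝ) ≤ |c|^n / n.factorial := by positivity
      nlinarith [Real.rpow_nonneg hb α]
    have hint2 : Integrable (fun u : ℝ => |c|^n / n.factorial * (1-u^2)^α) μ := by
      have hbase : IntegrableOn (fun u : ℝ => (1-u^2)^α) (Ioo (-1:ℝ) 1) := by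
        simpa using momentInt hα 0
      exact hbase.const_mul _
    calc (∫ u, ‖F n u‖ ∂μ) ≤ ∫ u, |c|^n / n.factorial * (1-u^2)^α ∂μ :=
          integral_mono_ae (hFint n).norm hint2 hle
      _ = |c|^n / n.factorial * B := by rw [integral_const_mul]
  have hsum : Summable fun n => ∫ u, ‖F n u‖ ∂μ := by
    refine Summable.of_nonneg_of_le (fun n => integral_nonneg fun u => norm_nonneg _)
      hnorm ?_
    exact (Real.summable_pow_div_factorial |c|).mul_right B
  have hkey := hasSum_integral_of_summable_integral_norm hFint hsum
  have htsum : ∀ u : ℝ, (∑' n, F n u) = u^k * Real.exp (c*u) * (1-u^2)^α := by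
    intro u
    have h1 : ∀ n : ℕ, F n u = ((c*u)^n / n.factorial) * (u^k * (1-u^2)^α) := by
      intro n
      rw [hF]
      simp only [mul_pow, pow_add]
      field_simp
    rw [tsum_congr h1, tsum_mul_right]
    have h2 : (∑' n : ℕ, (c*u)^n / n.factorial) = Real.exp (c*u) := by
      rw [Real.exp_eq_exp_ℝ, NormedSpace.exp_eq_tsum_div]
    rw [h2]
    ring
  have h5 : (∫ u, (∑' n, F n u) ∂μ) = ∫ u in Ioo (-1:ℝ) 1, u^k * Real.exp (c*u) * (1-u^2)^α :=
    setIntegral_congr_fun measurableSet_Ioo (fun u _ => htsum u)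
  rw [← h5]
  have h6 : ∀ n, (∫ u, F n u ∂μ)
      = c^n / n.factorial * ∫ u in Ioo (-1:ℝ) 1, u^(n+k) * (1-u^2)^α := fun n =>
    integral_const_mul _ _
  simpa only [h6] using hkey

end Series


section Assemble
variable {α : ℝ} (hα : -1 < α) (c : ℝ)

include hα in
lemma Jval_even (m : ℕ) :
    ∫ u in Ioo (-1:ℝ) 1, u^(2*m) * (1-u^2)^α
      = Real.Gamma ((m:ℝ)+1/2) * Real.Gamma (α+1) / Real.Gamma ((m:ℝ)+1/2+(α+1)) := by
  rw [J_split hα, momentOn01 hα]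
  have h1 : ((-1:ℝ))^(2*m) = 1 := Even.neg_one_pow ⟨m, by ring⟩
  rw [h1]
  have hg : 0 < Real.Gamma ((m:ℝ)+1/2+(α+1)) := Real.Gamma_pos_of_pos
    (by have := (Nat.cast_nonneg m : (0:ℝ) ≤ m); linarith)
  field_simp
  ring

include hα in
lemma Jval_odd (m : ℕ) :
    ∫ u in Ioo (-1:ℝ) 1, u^(2*m+1) * (1-u^2)^α = 0 := by
  rw [J_split hα]
  have h1 : ((-1:ℝ))^(2*m+1) = -1 := Odd.neg_one_pow ⟨m, by ring⟩
  rw [h1]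
  ring


lemma cancel_aux {x : ℝ} (hx : x ≠ 0) (S P Q : ℝ) : (S / x) * (P * x / Q) = S * P / Q := by
  field_simp

lemma term_even {α : ℝ} (hα : -1 < α) {c : ℝ} (hc : 0 < c) (m : ℕ) :
    c^(2*m)/((2*m).factorial : ℝ)
        * (Real.Gamma ((m:ℝ)+1/2) * Real.Gamma (α+1) / Real.Gamma ((m:ℝ)+1/2+(α+1)))
      = (Real.sqrt π * Real.Gamma (α+1) / (c/2)^(α+1/2))
        * ((c/2) ^ (2*(m:ℝ)+(α+1/2)) / ((m.factorial : ℝ) * Real.Gamma ((m:ℝ)+(α+1/2)+1))) := by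
  have hc2 : (0:ℝ) < c/2 := by linarith
  have hΓeq : (m:ℝ)+1/2+(α+1) = (m:ℝ)+(α+1/2)+1 := by ring
  rw [hΓeq]
  have hpow : (c/2) ^ (2*(m:ℝ)+(α+1/2)) = (c/2)^(2*m) * (c/2)^(α+1/2) := by
    rw [show 2*(m:ℝ)+(α+1/2) = ((2*m : ℕ):ℝ) + (α+1/2) by push_cast; ring,
      Real.rpow_add hc2, Real.rpow_natCast]
  rw [hpow]
  have h2 : ((c/2)^(2*m) : ℝ) = c^(2*m)/4^m := by
    rw [div_pow, show (2:ℝ)^(2*m) = 4^m by rw [pow_mul]; norm_num]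
  rw [h2]
  have hrp : (c/2)^(α+1/2) ≠ 0 := (Real.rpow_pos_of_pos hc2 _).ne'
  rw [cancel_aux hrp]
  have hG : Real.sqrt π * ((2*m).factorial : ℝ)
      = Real.Gamma ((m:ℝ)+1/2) * (4^m * (m.factorial:ℝ)) := by
    rw [gamma_nat_add_half]
    have h4 : ((4:ℝ)^m * (m.factorial:ℝ)) ≠ 0 := by positivity
    field_simp
  have hfac1 : ((2*m).factorial : ℝ) ≠ 0 := Nat.cast_ne_zero.2 (Nat.factorial_ne_zero _)
  have hfac2 : ((m).factorial : ℝ) ≠ 0 := Nat.cast_ne_zero.2 (Nat.factorial_ne_zero _)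
  have hΓb : Real.Gamma ((m:ℝ)+(α+1/2)+1) ≠ 0 := (Real.Gamma_pos_of_pos
    (by have := (Nat.cast_nonneg m : (0:ℝ) ≤ m); linarith)).ne'
  have h4 : ((4:ℝ)^m) ≠ 0 := by positivity
  rw [div_mul_div_comm, mul_div_assoc', div_div,
    div_eq_div_iff (by positivity) (by positivity)]
  linear_combination (-Real.Gamma (α+1) * c^(2*m) * Real.Gamma ((m:ℝ)+(α+1/2)+1)) * hG

lemma term_odd {α : ℝ} (hα : -1 < α) {c : ℝ} (hc : 0 < c) (m : ℕ) :
    c^(2*m+1)/((2*m+1).factorial : ℝ)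
        * (Real.Gamma (((m:ℝ)+1)+1/2) * Real.Gamma (α+1) / Real.Gamma (((m:ℝ)+1)+1/2+(α+1)))
      = (Real.sqrt π * Real.Gamma (α+1) / (c/2)^(α+1/2))
        * ((c/2) ^ (2*(m:ℝ)+(α+1/2+1))
            / ((m.factorial : ℝ) * Real.Gamma ((m:ℝ)+(α+1/2+1)+1))) := by
  have hc2 : (0:ℝ) < c/2 := by linarith
  have hΓeq : (m:ℝ)+1+1/2+(α+1) = (m:ℝ)+(α+1/2+1)+1 := by ring
  rw [hΓeq]
  have hpow : (c/2) ^ (2*(m:ℝ)+(α+1/2+1)) = (c/2)^(2*m+1) * (c/2)^(α+1/2) := by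
    rw [show 2*(m:ℝ)+(α+1/2+1) = ((2*m+1 : ℕ):ℝ) + (α+1/2) by push_cast; ring,
      Real.rpow_add hc2, Real.rpow_natCast]
  rw [hpow]
  have h2 : ((c/2)^(2*m+1) : ℝ) = c^(2*m+1)/(2*4^m) := by
    rw [div_pow, show (2:ℝ)^(2*m+1) = 2*4^m by rw [pow_succ, pow_mul]; norm_num; ring]
  rw [h2]
  have hrp : (c/2)^(α+1/2) ≠ 0 := (Real.rpow_pos_of_pos hc2 _).ne'
  rw [cancel_aux hrp]
  have hG := gamma_nat_add_half (m+1)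
  rw [Nat.cast_add, Nat.cast_one] at hG
  have hG2 : Real.sqrt π * (((2*(m+1)).factorial : ℕ) : ℝ)
      = Real.Gamma ((m:ℝ)+1+1/2) * (4^(m+1) * (((m+1).factorial : ℕ) : ℝ)) := by
    rw [hG]
    have h4 : ((4:ℝ)^(m+1) * (((m+1).factorial : ℕ):ℝ)) ≠ 0 := by positivity
    field_simp
  have hfaceq : (((2*(m+1)).factorial : ℕ) : ℝ) = (2*(m:ℝ)+2) * (((2*m+1).factorial : ℕ) : ℝ) := by
    rw [show 2*(m+1) = (2*m+1)+1 by ring, Nat.factorial_succ]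
    push_cast; ring
  have hfacm1 : (((m+1).factorial : ℕ) : ℝ) = ((m:ℝ)+1) * ((m.factorial : ℕ) : ℝ) := by
    rw [Nat.factorial_succ]; push_cast; ring
  rw [hfaceq, hfacm1] at hG2
  have hKey : Real.sqrt π * (((2*m+1).factorial : ℕ) : ℝ)
      = Real.Gamma ((m:ℝ)+1+1/2) * (2 * 4^m * ((m.factorial : ℕ) : ℝ)) := by
    have h2m2 : ((2:ℝ)*(m:ℝ)+2) ≠ 0 := by positivity
    apply mul_left_cancel₀ h2m2
    linear_combination hG2
  have hfac1 : ((2*m+1).factorial : ℝ) ≠ 0 := Nat.cast_ne_zero.2 (Nat.factorial_ne_zero _)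
  have hfac2 : ((m).factorial : ℝ) ≠ 0 := Nat.cast_ne_zero.2 (Nat.factorial_ne_zero _)
  have hΓb : Real.Gamma ((m:ℝ)+(α+1/2+1)+1) ≠ 0 := (Real.Gamma_pos_of_pos
    (by have := (Nat.cast_nonneg m : (0:ℝ) ≤ m); linarith)).ne'
  have h4 : ((4:ℝ)^m) ≠ 0 := by positivity
  rw [div_mul_div_comm, mul_div_assoc', div_div,
    div_eq_div_iff (by positivity) (by positivity)]
  linear_combination (-Real.Gamma (α+1) * c^(2*m+1) * Real.Gamma ((m:ℝ)+(α+1/2+1)+1)) * hKey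


set_option maxHeartbeats 1000000 in
lemma D_eq {α : ℝ} (hα : -1 < α) (c : ℝ) (hc : 0 < c) :
    ∫ u in Ioo (-1:ℝ) 1, Real.exp (c*u) * (1-u^2)^α
      = (Real.sqrt π * Real.Gamma (α+1) / (c/2)^(α+1/2))
        * ∑' m : ℕ, (c/2) ^ (2*(m:ℝ)+(α+1/2))
            / ((m.factorial : ℝ) * Real.Gamma ((m:ℝ)+(α+1/2)+1)) := by
  have hs := series_hasSum hα c 0
  simp only [pow_zero, add_zero, one_mul] at hs
  have hsumm := hs.summable
  have he : Summable fun k : ℕ =>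
      c^(2*k) / ((2*k).factorial : ℝ) * ∫ u in Ioo (-1:ℝ) 1, u^(2*k) * (1-u^2)^α :=
    hsumm.comp_injective (i := fun k : ℕ => 2*k) (fun a b h => by have h' : 2*a = 2*b := h; omega)
  have ho : Summable fun k : ℕ =>
      c^(2*k+1) / ((2*k+1).factorial : ℝ) * ∫ u in Ioo (-1:ℝ) 1, u^(2*k+1) * (1-u^2)^α :=
    hsumm.comp_injective (i := fun k : ℕ => 2*k+1) (fun a b h => by have h' : 2*a+1 = 2*b+1 := h; omega)
  rw [← hs.tsum_eq, ← tsum_even_add_odd he ho]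
  have hodd : ∀ k : ℕ,
      c^(2*k+1) / ((2*k+1).factorial : ℝ) * ∫ u in Ioo (-1:ℝ) 1, u^(2*k+1) * (1-u^2)^α = 0 :=
    fun k => by rw [Jval_odd hα]; ring
  rw [tsum_congr hodd, tsum_zero, add_zero]
  have heven : ∀ k : ℕ,
      c^(2*k) / ((2*k).factorial : ℝ) * ∫ u in Ioo (-1:ℝ) 1, u^(2*k) * (1-u^2)^α
        = (Real.sqrt π * Real.Gamma (α+1) / (c/2)^(α+1/2))
          * ((c/2) ^ (2*(k:ℝ)+(α+1/2)) / ((k.factorial : ℝ) * Real.Gamma ((k:ℝ)+(α+1/2)+1))) :=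
    fun k => by rw [Jval_even hα, term_even hα hc]
  rw [tsum_congr heven, tsum_mul_left]

set_option maxHeartbeats 1000000 in
lemma M_eq {α : ℝ} (hα : -1 < α) (c : ℝ) (hc : 0 < c) :
    ∫ u in Ioo (-1:ℝ) 1, u * Real.exp (c*u) * (1-u^2)^α
      = (Real.sqrt π * Real.Gamma (α+1) / (c/2)^(α+1/2))
        * ∑' m : ℕ, (c/2) ^ (2*(m:ℝ)+(α+1/2+1))
            / ((m.factorial : ℝ) * Real.Gamma ((m:ℝ)+(α+1/2+1)+1)) := by
  have hs := series_hasSum hα c 1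
  simp only [pow_one] at hs
  have hsumm := hs.summable
  have he : Summable fun k : ℕ =>
      c^(2*k) / ((2*k).factorial : ℝ) * ∫ u in Ioo (-1:ℝ) 1, u^(2*k+1) * (1-u^2)^α :=
    hsumm.comp_injective (i := fun k : ℕ => 2*k) (fun a b h => by have h' : 2*a = 2*b := h; omega)
  have ho : Summable fun k : ℕ =>
      c^(2*k+1) / ((2*k+1).factorial : ℝ) * ∫ u in Ioo (-1:ℝ) 1, u^(2*k+1+1) * (1-u^2)^α :=
    hsumm.comp_injective (i := fun k : ℕ => 2*k+1)
      (fun a b h => by have h' : 2*a+1 = 2*b+1 := h; omega)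
  rw [← hs.tsum_eq, ← tsum_even_add_odd he ho]
  have heven : ∀ k : ℕ,
      c^(2*k) / ((2*k).factorial : ℝ) * ∫ u in Ioo (-1:ℝ) 1, u^(2*k+1) * (1-u^2)^α = 0 :=
    fun k => by rw [Jval_odd hα]; ring
  rw [tsum_congr heven, tsum_zero, zero_add]
  have hodd : ∀ k : ℕ,
      c^(2*k+1) / ((2*k+1).factorial : ℝ) * ∫ u in Ioo (-1:ℝ) 1, u^(2*k+1+1) * (1-u^2)^α
        = (Real.sqrt π * Real.Gamma (α+1) / (c/2)^(α+1/2))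
          * ((c/2) ^ (2*(k:ℝ)+(α+1/2+1))
              / ((k.factorial : ℝ) * Real.Gamma ((k:ℝ)+(α+1/2+1)+1))) := by
    intro k
    have hidx : (∫ u in Ioo (-1:ℝ) 1, u^(2*k+1+1) * (1-u^2)^α)
        = ∫ u in Ioo (-1:ℝ) 1, u^(2*(k+1)) * (1-u^2)^α := by
      rw [show 2*k+1+1 = 2*(k+1) from by ring]
    rw [hidx, Jval_even hα (k+1), Nat.cast_add, Nat.cast_one, term_odd hα hc]
  rw [tsum_congr hodd, tsum_mul_left]

theorem stmt_7 (N : ℕ) (hN : 2 ≤ N) (c : ℝ) (hc : 0 < c) :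
    (∫ u in (-1 : ℝ)..1, u * Real.exp (c * u) * (1 - u ^ 2) ^ (((N : ℝ) - 3) / 2)) /
        (∫ u in (-1 : ℝ)..1, Real.exp (c * u) * (1 - u ^ 2) ^ (((N : ℝ) - 3) / 2))
      = besselI ((N : ℝ) / 2) c / besselI ((N : ℝ) / 2 - 1) c := by
  have hN2 : (2:ℝ) ≤ (N:ℝ) := by exact_mod_cast hN
  set α : ℝ := ((N:ℝ)-3)/2 with hαdef
  have hα : -1 < α := by rw [hαdef]; linarith
  have hD := D_eq hα c hc
  have hM := M_eq hα c hc
  have e1 : α + 1/2 = (N:ℝ)/2 - 1 := by rw [hαdef]; ring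
  have e2 : (N:ℝ)/2 - 1 + 1 = (N:ℝ)/2 := by ring
  rw [e1, e2] at hM
  rw [e1] at hD
  rw [intervalIntegral.integral_of_le (by norm_num : (-1:ℝ) ≤ 1),
    integral_Ioc_eq_integral_Ioo,
    intervalIntegral.integral_of_le (by norm_num : (-1:ℝ) ≤ 1),
    integral_Ioc_eq_integral_Ioo, hM, hD, besselI, besselI]
  refine mul_div_mul_left _ _ ?_
  have h1 : (0:ℝ) < Real.sqrt π := Real.sqrt_pos.2 Real.pi_pos
  have h2 : (0:ℝ) < Real.Gamma (α+1) := Real.Gamma_pos_of_pos (by linarith)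
  have h3 : (0:ℝ) < (c/2)^((N:ℝ)/2-1) := Real.rpow_pos_of_pos (by linarith) _
  positivity
end Assemble
end

section
/- Let N ≥ 2 and β > N. Then the functional F(ν) = H(ν|μ) - (β/2)|∫ x dν(x)|² over probability measures ν on S^{N-1} has infimum strictly less than 0; in particular the uniform measure μ is not the minimizer. -/
open MeasureTheory Real Filter Set

/-- The uniform probability measure on the unit sphere in `R^N`. -/
noncomputable def sphereUniform (N : ℕ) :
    Measure (Metric.sphere (0 : EuclideanSpace ℝ (Fin N)) 1) :=
  (((volume : Measure (EuclideanSpace ℝ (Fin N))).toSphere Set.univ)⁻¹) •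
    (volume : Measure (EuclideanSpace ℝ (Fin N))).toSphere

open Classical in
/-- Relative entropy `H(ν | μ) = ∫ (dν/dμ) log (dν/dμ) dμ` when the density exists
(with value `⊤` otherwise or when the integral diverges). -/
noncomputable def relEntropy {α : Type*} [MeasurableSpace α] (ν μ : Measure α) : EReal :=
  if ν ≪ μ ∧ Integrable (llr ν μ) ν then ((∫ x, llr ν μ x ∂ν : ℝ) : EReal) else ⊤

section Aux
open Metric
open scoped ENNReal NNReal Pointwise

lemma mem_sph {N : ℕ} (f : EuclideanSpace ℝ (Fin N) ≃ₗᵢ[ℝ] EuclideanSpace ℝ (Fin N))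
    (x : Metric.sphere (0 : EuclideanSpace ℝ (Fin N)) 1) :
    f x ∈ Metric.sphere (0 : EuclideanSpace ℝ (Fin N)) 1 :=
  mem_sphere_zero_iff_norm.2 (by rw [f.norm_map]; exact mem_sphere_zero_iff_norm.1 x.2)

noncomputable def sphMap {N : ℕ} (f : EuclideanSpace ℝ (Fin N) ≃ₗᵢ[ℝ] EuclideanSpace ℝ (Fin N)) :
    Metric.sphere (0 : EuclideanSpace ℝ (Fin N)) 1 →
      Metric.sphere (0 : EuclideanSpace ℝ (Fin N)) 1 :=
  fun x => ⟨f x, mem_sph f x⟩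

lemma sphMap_continuous {N : ℕ} (f : EuclideanSpace ℝ (Fin N) ≃ₗᵢ[ℝ] EuclideanSpace ℝ (Fin N)) :
    Continuous (sphMap f) :=
  Continuous.subtype_mk (f.continuous.comp continuous_subtype_val) _

lemma sphMap_injective {N : ℕ} (f : EuclideanSpace ℝ (Fin N) ≃ₗᵢ[ℝ] EuclideanSpace ℝ (Fin N)) :
    Function.Injective (sphMap f) := by
  intro x y h
  apply Subtype.ext
  exact f.injective (congrArg Subtype.val h)

lemma sphMap_membedding {N : ℕ} (f : EuclideanSpace ℝ (Fin N) ≃ₗᵢ[ℝ] EuclideanSpace ℝ (Fin N)) :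
    MeasurableEmbedding (sphMap f) := by
  haveI : CompactSpace (Metric.sphere (0 : EuclideanSpace ℝ (Fin N)) 1) := inferInstance
  exact ((sphMap_continuous f).isClosedEmbedding (sphMap_injective f)).measurableEmbedding

lemma sphMap_image {N : ℕ} (f : EuclideanSpace ℝ (Fin N) ≃ₗᵢ[ℝ] EuclideanSpace ℝ (Fin N))
    (s : Set (Metric.sphere (0 : EuclideanSpace ℝ (Fin N)) 1)) :
    Subtype.val '' (sphMap f ⁻¹' s) = f ⁻¹' (Subtype.val '' s) := by
  ext x
  simp only [mem_image, mem_preimage]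
  constructor
  · rintro ⟨y, hy, rfl⟩
    exact ⟨sphMap f y, hy, rfl⟩
  · rintro ⟨y, hy, hxy⟩
    have hx : x ∈ Metric.sphere (0 : EuclideanSpace ℝ (Fin N)) 1 := by
      rw [mem_sphere_zero_iff_norm, ← f.norm_map]
      rw [← hxy]
      exact mem_sphere_zero_iff_norm.1 y.2
    refine ⟨⟨x, hx⟩, ?_, rfl⟩
    have h2 : sphMap f ⟨x, hx⟩ = y := Subtype.ext hxy.symm
    rw [h2]; exact hy

lemma preimage_smulSet {N : ℕ} (f : EuclideanSpace ℝ (Fin N) ≃ₗᵢ[ℝ] EuclideanSpace ℝ (Fin N))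
    (A : Set (EuclideanSpace ℝ (Fin N))) (t : Set ℝ) :
    f ⁻¹' (t • A) = t • (f ⁻¹' A) := by
  ext x
  show f x ∈ t • A ↔ x ∈ t • (f ⁻¹' A)
  constructor
  · rintro ⟨c, hc, a, ha, hax⟩
    refine ⟨c, hc, f.symm a, by simpa using ha, ?_⟩
    apply f.injective
    rw [_root_.map_smul, LinearIsometryEquiv.apply_symm_apply]
    exact hax
  · rintro ⟨c, hc, a, ha, rfl⟩
    exact ⟨c, hc, f a, ha, by simp⟩

lemma map_sphMap_toSphere {N : ℕ} (f : EuclideanSpace ℝ (Fin N) ≃ₗᵢ[ℝ] EuclideanSpace ℝ (Fin N)) :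
    Measure.map (sphMap f) ((volume : Measure (EuclideanSpace ℝ (Fin N))).toSphere) =
      (volume : Measure (EuclideanSpace ℝ (Fin N))).toSphere := by
  ext s hs
  rw [Measure.map_apply (sphMap_continuous f).measurable hs,
    Measure.toSphere_apply' _ (hs.preimage (sphMap_continuous f).measurable),
    Measure.toSphere_apply' _ hs, sphMap_image, ← preimage_smulSet]
  congr 1
  exact f.measurePreserving.measure_preimage_emb
    f.toHomeomorph.measurableEmbedding _

lemma sphMap_measurePreserving {N : ℕ}
    (f : EuclideanSpace ℝ (Fin N) ≃ₗᵢ[ℝ] EuclideanSpace ℝ (Fin N)) :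
    MeasurePreserving (sphMap f) (sphereUniform N) (sphereUniform N) := by
  refine ⟨(sphMap_continuous f).measurable, ?_⟩
  rw [sphereUniform, Measure.map_smul, map_sphMap_toSphere]

lemma integral_sphMap {N : ℕ} {G : Type*} [NormedAddCommGroup G] [NormedSpace ℝ G]
    (f : EuclideanSpace ℝ (Fin N) ≃ₗᵢ[ℝ] EuclideanSpace ℝ (Fin N))
    (g : Metric.sphere (0 : EuclideanSpace ℝ (Fin N)) 1 → G) :
    ∫ x, g (sphMap f x) ∂(sphereUniform N) = ∫ x, g x ∂(sphereUniform N) :=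
  (sphMap_measurePreserving f).integral_comp (sphMap_membedding f) g

section integrals

variable {N : ℕ}

local notation "μu" => sphereUniform N

lemma sphereUniform_prob (hN : 1 ≤ N) : IsProbabilityMeasure (sphereUniform N) := by
  constructor
  rw [sphereUniform, Measure.smul_apply, smul_eq_mul]
  refine ENNReal.inv_mul_cancel ?_ (measure_ne_top _ _)
  haveI : Nontrivial (EuclideanSpace ℝ (Fin N)) := by
    refine ⟨EuclideanSpace.single ⟨0, hN⟩ 1, 0, fun h => ?_⟩
    have := congrArg (fun v : EuclideanSpace ℝ (Fin N) => v ⟨0, hN⟩) h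
    simpa using this
  rw [Measure.toSphere_apply_univ]
  have h1 : (0:ℝ≥0∞) < Module.finrank ℝ (EuclideanSpace ℝ (Fin N)) := by
    have : 0 < Module.finrank ℝ (EuclideanSpace ℝ (Fin N)) := Module.finrank_pos
    exact_mod_cast this
  have h2 : 0 < (volume : Measure (EuclideanSpace ℝ (Fin N))) (Metric.ball 0 1) :=
    Metric.measure_ball_pos _ _ one_pos
  exact (ENNReal.mul_pos h1.ne' h2.ne').ne'

lemma coordS_continuous (i : Fin N) :
    Continuous (fun x : Metric.sphere (0 : EuclideanSpace ℝ (Fin N)) 1 =>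
      (x : EuclideanSpace ℝ (Fin N)) i) :=
  (EuclideanSpace.proj (𝕜 := ℝ) i).continuous.comp continuous_subtype_val

lemma integrable_of_continuous (hN : 1 ≤ N) {G : Type*} [NormedAddCommGroup G]
    {g : Metric.sphere (0 : EuclideanSpace ℝ (Fin N)) 1 → G} (hg : Continuous g) :
    Integrable g μu := by
  haveI := sphereUniform_prob hN
  exact hg.integrable_of_hasCompactSupport (HasCompactSupport.of_compactSpace g)

lemma integral_coord_zero (i : Fin N) :
    ∫ x : Metric.sphere (0 : EuclideanSpace ℝ (Fin N)) 1,
      (x : EuclideanSpace ℝ (Fin N)) i ∂μu = 0 := by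
  have h := integral_sphMap (G := ℝ) (LinearIsometryEquiv.neg ℝ)
    (fun x : Metric.sphere (0 : EuclideanSpace ℝ (Fin N)) 1 =>
      (x : EuclideanSpace ℝ (Fin N)) i)
  have h2 : ∀ x : Metric.sphere (0 : EuclideanSpace ℝ (Fin N)) 1,
      ((sphMap (LinearIsometryEquiv.neg ℝ) x : EuclideanSpace ℝ (Fin N)) i)
        = -((x : EuclideanSpace ℝ (Fin N)) i) := by
    intro x; rfl
  rw [funext h2] at h
  rw [integral_neg] at h
  linarith

lemma integral_coord_sq_eq (i j : Fin N) :
    ∫ x : Metric.sphere (0 : EuclideanSpace ℝ (Fin N)) 1,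
      ((x : EuclideanSpace ℝ (Fin N)) i)^2 ∂μu
    = ∫ x : Metric.sphere (0 : EuclideanSpace ℝ (Fin N)) 1,
      ((x : EuclideanSpace ℝ (Fin N)) j)^2 ∂μu := by
  have h := integral_sphMap (G := ℝ)
    (LinearIsometryEquiv.piLpCongrLeft 2 ℝ ℝ (Equiv.swap i j))
    (fun x : Metric.sphere (0 : EuclideanSpace ℝ (Fin N)) 1 =>
      ((x : EuclideanSpace ℝ (Fin N)) i)^2)
  have h2 : ∀ x : Metric.sphere (0 : EuclideanSpace ℝ (Fin N)) 1,
      ((sphMap (LinearIsometryEquiv.piLpCongrLeft 2 ℝ ℝ (Equiv.swap i j)) x :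
        EuclideanSpace ℝ (Fin N)) i) = (x : EuclideanSpace ℝ (Fin N)) j := by
    intro x
    show (LinearIsometryEquiv.piLpCongrLeft 2 ℝ ℝ (Equiv.swap i j)
      (x : EuclideanSpace ℝ (Fin N))) i = _
    rw [LinearIsometryEquiv.piLpCongrLeft_apply]
    show (x : EuclideanSpace ℝ (Fin N)) ((Equiv.swap i j).symm i) = _
    rw [Equiv.symm_swap, Equiv.swap_apply_left]
  rw [show (fun x : Metric.sphere (0 : EuclideanSpace ℝ (Fin N)) 1 =>
      ((sphMap (LinearIsometryEquiv.piLpCongrLeft 2 ℝ ℝ (Equiv.swap i j)) x :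
        EuclideanSpace ℝ (Fin N)) i)^2)
    = (fun x : Metric.sphere (0 : EuclideanSpace ℝ (Fin N)) 1 =>
      ((x : EuclideanSpace ℝ (Fin N)) j)^2) from funext (fun x => by rw [h2 x])] at h
  exact h.symm

lemma sum_coord_sq (x : Metric.sphere (0 : EuclideanSpace ℝ (Fin N)) 1) :
    ∑ i : Fin N, ((x : EuclideanSpace ℝ (Fin N)) i)^2 = 1 := by
  have h := mem_sphere_zero_iff_norm.1 x.2
  rw [EuclideanSpace.norm_eq] at h
  have h2 := congrArg (fun r : ℝ => r^2) h
  simp only [Real.sq_sqrt (by positivity :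
    (0:ℝ) ≤ ∑ i : Fin N, ‖(x : EuclideanSpace ℝ (Fin N)) i‖^2)] at h2
  simpa [Real.norm_eq_abs, sq_abs] using h2

lemma integral_coord_sq (hN : 1 ≤ N) (i : Fin N) :
    ∫ x : Metric.sphere (0 : EuclideanSpace ℝ (Fin N)) 1,
      ((x : EuclideanSpace ℝ (Fin N)) i)^2 ∂μu = 1 / N := by
  haveI := sphereUniform_prob hN
  have hsum : ∑ j : Fin N, ∫ x : Metric.sphere (0 : EuclideanSpace ℝ (Fin N)) 1,
      ((x : EuclideanSpace ℝ (Fin N)) j)^2 ∂μu = 1 := by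
    rw [← integral_finset_sum _ (fun j _ =>
      integrable_of_continuous hN (g := fun x : Metric.sphere (0 : EuclideanSpace ℝ (Fin N)) 1 =>
        ((x : EuclideanSpace ℝ (Fin N)) j)^2) ((coordS_continuous j).pow 2))]
    rw [show (fun x : Metric.sphere (0 : EuclideanSpace ℝ (Fin N)) 1 =>
        ∑ j : Fin N, ((x : EuclideanSpace ℝ (Fin N)) j)^2)
      = (fun _ => (1:ℝ)) from funext (fun x => sum_coord_sq x)]
    simp
  have hall : ∀ j : Fin N, ∫ x : Metric.sphere (0 : EuclideanSpace ℝ (Fin N)) 1,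
      ((x : EuclideanSpace ℝ (Fin N)) j)^2 ∂μu
      = ∫ x : Metric.sphere (0 : EuclideanSpace ℝ (Fin N)) 1,
      ((x : EuclideanSpace ℝ (Fin N)) i)^2 ∂μu := fun j => integral_coord_sq_eq j i
  rw [Finset.sum_congr rfl (fun j _ => hall j), Finset.sum_const, Finset.card_univ,
    Fintype.card_fin, nsmul_eq_mul] at hsum
  have hNpos : (0:ℝ) < N := by exact_mod_cast hN
  field_simp at hsum ⊢
  linarith

end integrals

lemma hasDerivAt_entfun (u : ℝ) (hu : 0 < 1 + u) :
    HasDerivAt (fun v : ℝ => (1 + v) * Real.log (1 + v)) (Real.log (1 + u) + 1) u := by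
  have h1 : HasDerivAt (fun v : ℝ => 1 + v) 1 u := (hasDerivAt_id u).const_add 1
  have h2 : HasDerivAt (fun v : ℝ => Real.log (1 + v)) (1 / (1 + u)) u := by
    simpa using h1.log hu.ne'
  have := h1.mul h2
  exact this.congr_deriv (by rw [one_mul, mul_one_div_cancel hu.ne'])

lemma ent_ineq_pos {u : ℝ} (hu : 0 ≤ u) :
    (1 + u) * Real.log (1 + u) ≤ u + u^2/2 + u^3 := by
  set φ : ℝ → ℝ := fun v => v + v^2/2 + v^3 - (1 + v) * Real.log (1 + v) with hφ
  have key : MonotoneOn φ (Ici 0) := by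
    have hd : ∀ v : ℝ, 0 < 1 + v → HasDerivAt φ (1 + v + 3*v^2 - (Real.log (1 + v) + 1)) v := by
      intro v hv
      have h1 : HasDerivAt (fun w : ℝ => w + w^2/2 + w^3) (1 + v + 3*v^2) v := by
        have := ((hasDerivAt_id v).add (((hasDerivAt_pow 2 v).div_const 2))).add
          (hasDerivAt_pow 3 v)
        exact this.congr_deriv (by ring)
      exact h1.sub (hasDerivAt_entfun v hv)
    refine monotoneOn_of_deriv_nonneg (convex_Ici 0) ?_ ?_ ?_
    · intro v hv
      simp only [mem_Ici] at hv
      exact ((hd v (by linarith)).continuousAt.continuousWithinAt)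
    · intro v hv
      rw [interior_Ici] at hv
      exact ((hd v (by simp at hv; linarith)).differentiableAt.differentiableWithinAt)
    · intro v hv
      rw [interior_Ici] at hv
      simp only [mem_Ioi] at hv
      rw [(hd v (by linarith)).deriv]
      have := Real.log_le_sub_one_of_pos (show (0:ℝ) < 1 + v by linarith)
      nlinarith
  have h0 : φ 0 ≤ φ u := key (by simp) (by simpa using hu) hu
  simp only [hφ] at h0
  norm_num at h0
  linarith

lemma ent_ineq_neg {u : ℝ} (hu : -(1/2) ≤ u) (hu0 : u ≤ 0) :
    (1 + u) * Real.log (1 + u) ≤ u + u^2/2 - u^3 := by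
  set ψ : ℝ → ℝ := fun v => v + v^2/2 - v^3 - (1 + v) * Real.log (1 + v) with hψ
  have key : AntitoneOn ψ (Icc (-(1/2)) 0) := by
    have hd : ∀ v : ℝ, 0 < 1 + v → HasDerivAt ψ (1 + v - 3*v^2 - (Real.log (1 + v) + 1)) v := by
      intro v hv
      have h1 : HasDerivAt (fun w : ℝ => w + w^2/2 - w^3) (1 + v - 3*v^2) v := by
        have := ((hasDerivAt_id v).add (((hasDerivAt_pow 2 v).div_const 2))).sub
          (hasDerivAt_pow 3 v)
        exact this.congr_deriv (by ring)
      exact h1.sub (hasDerivAt_entfun v hv)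
    refine antitoneOn_of_deriv_nonpos (convex_Icc _ _) ?_ ?_ ?_
    · intro v hv
      simp only [mem_Icc] at hv
      exact ((hd v (by linarith)).continuousAt.continuousWithinAt)
    · intro v hv
      rw [interior_Icc] at hv
      simp only [mem_Ioo] at hv
      exact ((hd v (by linarith)).differentiableAt.differentiableWithinAt)
    · intro v hv
      rw [interior_Icc] at hv
      simp only [mem_Ioo] at hv
      rw [(hd v (by linarith)).deriv]
      have hv1 : (0:ℝ) < 1 + v := by linarith
      have hlog := Real.one_sub_inv_le_log_of_pos hv1
      have hinv : (1 + v) * (1 + v)⁻¹ = 1 := mul_inv_cancel₀ hv1.ne'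
      nlinarith [sq_nonneg v, mul_pos hv1 (inv_pos.2 hv1)]
  have h0 : ψ 0 ≤ ψ u := key (by constructor <;> linarith) (by constructor <;> linarith) hu0
  simp only [hψ] at h0
  norm_num at h0
  linarith

lemma ent_ineq {u : ℝ} (hu : |u| ≤ 1/2) :
    (1 + u) * Real.log (1 + u) ≤ u + u^2/2 + |u|^3 := by
  rcases le_or_gt 0 u with h | h
  · rw [abs_of_nonneg h]
    exact ent_ineq_pos h
  · rw [abs_of_neg h]
    have := ent_ineq_neg (by rw [abs_of_neg h] at hu; linarith) h.le
    calc (1 + u) * Real.log (1 + u) ≤ u + u^2/2 - u^3 := this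
    _ = u + u^2/2 + (-u)^3 := by ring

end Aux

set_option maxHeartbeats 1000000 in
open scoped ENNReal NNReal in
theorem stmt_10 (N : ℕ) (hN : 2 ≤ N) (β : ℝ) (hβ : (N : ℝ) < β) :
    ∃ ν : Measure (Metric.sphere (0 : EuclideanSpace ℝ (Fin N)) 1),
      IsProbabilityMeasure ν ∧
      relEntropy ν (sphereUniform N) <
        ((β / 2 * ‖∫ θ : Metric.sphere (0 : EuclideanSpace ℝ (Fin N)) 1,
          (θ : EuclideanSpace ℝ (Fin N)) ∂ν‖ ^ 2 : ℝ) : EReal) := by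
  classical
  have hN1 : 1 ≤ N := le_trans (by norm_num) hN
  haveI hprob := sphereUniform_prob (N := N) hN1
  have hNpos : (0:ℝ) < N := by exact_mod_cast hN1
  have hβN : (0:ℝ) < β - N := by linarith
  set i0 : Fin N := ⟨0, by omega⟩ with hi0
  set t : Metric.sphere (0 : EuclideanSpace ℝ (Fin N)) 1 → ℝ :=
    fun x => (x : EuclideanSpace ℝ (Fin N)) i0 with ht
  have htcont : Continuous t := coordS_continuous i0
  set b : ℝ := min (1/2) ((β - N)/(4*N^2)) with hb
  have hb0 : 0 < b := lt_min (by norm_num) (div_pos hβN (by positivity))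
  have hbhalf : b ≤ 1/2 := min_le_left _ _
  have hbβ : b * (2*N^2) < β - N := by
    have h1 : b ≤ (β - N)/(4*N^2) := min_le_right _ _
    have h2 : (β - N)/(4*N^2) < (β - N)/(2*N^2) := by
      apply div_lt_div_of_pos_left hβN (by positivity)
      nlinarith
    have h3 : b < (β - N)/(2*N^2) := lt_of_le_of_lt h1 h2
    exact (lt_div_iff₀ (by positivity)).1 h3
  set F : Metric.sphere (0 : EuclideanSpace ℝ (Fin N)) 1 → ℝ :=
    fun x => 1 + b * t x with hFdef
  have hFcont : Continuous F := continuous_const.add (continuous_const.mul htcont)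
  have htabs : ∀ x, |t x| ≤ 1 := by
    intro x
    rw [← sq_le_one_iff_abs_le_one]
    have hs := sum_coord_sq x
    have : (t x)^2 ≤ ∑ i : Fin N, ((x : EuclideanSpace ℝ (Fin N)) i)^2 :=
      Finset.single_le_sum (f := fun i => ((x : EuclideanSpace ℝ (Fin N)) i)^2)
        (fun i _ => sq_nonneg _) (Finset.mem_univ i0)
    linarith
  have hbt : ∀ x, |b * t x| ≤ 1/2 := by
    intro x
    rw [abs_mul, abs_of_pos hb0]
    calc b * |t x| ≤ b * 1 := by
          exact mul_le_mul_of_nonneg_left (htabs x) hb0.le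
    _ ≤ 1/2 := by linarith
  have hFpos : ∀ x, (0:ℝ) < F x := by
    intro x
    have := abs_le.1 (hbt x)
    simp only [hFdef]
    linarith [this.1]
  have hFnonneg : ∀ x, (0:ℝ) ≤ F x := fun x => (hFpos x).le
  set ν : Measure (Metric.sphere (0 : EuclideanSpace ℝ (Fin N)) 1) :=
    (sphereUniform N).withDensity (fun x => ENNReal.ofReal (F x)) with hν
  have hFint : Integrable F (sphereUniform N) := integrable_of_continuous hN1 hFcont
  have h_t_int : Integrable t (sphereUniform N) := integrable_of_continuous hN1 htcont
  have h_t2_int : Integrable (fun x => (t x)^2) (sphereUniform N) :=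
    integrable_of_continuous hN1 (htcont.pow 2)
  have hintF : ∫ x, F x ∂(sphereUniform N) = 1 := by
    simp only [hFdef]
    rw [integral_add (integrable_const 1) (h_t_int.const_mul b), integral_const_mul,
      integral_coord_zero i0]
    simp
  have hνuniv : ν Set.univ = 1 := by
    rw [hν, withDensity_apply _ MeasurableSet.univ, setLIntegral_univ,
      ← ofReal_integral_eq_lintegral_ofReal hFint (Filter.Eventually.of_forall hFnonneg),
      hintF]
    simp
  haveI hνprob : IsProbabilityMeasure ν := ⟨hνuniv⟩
  -- integrals against ν rewrite as integrals against μ with weight F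
  have hsmul : ∀ {G : Type} [NormedAddCommGroup G] [NormedSpace ℝ G]
      (g : Metric.sphere (0 : EuclideanSpace ℝ (Fin N)) 1 → G),
      ∫ x, g x ∂ν = ∫ x, F x • g x ∂(sphereUniform N) := by
    intro G _ _ g
    have hmeas : Measurable (fun x => (F x).toNNReal) :=
      measurable_real_toNNReal.comp hFcont.measurable
    have : ν = (sphereUniform N).withDensity
        (fun x => (((F x).toNNReal : ℝ≥0) : ℝ≥0∞)) := rfl
    rw [this, integral_withDensity_eq_integral_smul hmeas]
    refine integral_congr_ae (Filter.Eventually.of_forall fun x => ?_)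
    show (F x).toNNReal • g x = F x • g x
    rw [NNReal.smul_def, Real.coe_toNNReal _ (hFnonneg x)]
  refine ⟨ν, hνprob, ?_⟩
  -- the mean of ν
  set m : EuclideanSpace ℝ (Fin N) :=
    ∫ θ : Metric.sphere (0 : EuclideanSpace ℝ (Fin N)) 1,
      (θ : EuclideanSpace ℝ (Fin N)) ∂ν with hm
  set e : EuclideanSpace ℝ (Fin N) := EuclideanSpace.single i0 (1:ℝ) with he
  have hxint : Integrable (fun x : Metric.sphere (0 : EuclideanSpace ℝ (Fin N)) 1 =>
      (x : EuclideanSpace ℝ (Fin N))) ν :=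
    continuous_subtype_val.integrable_of_hasCompactSupport
      (HasCompactSupport.of_compactSpace _)
  have hinner : (inner ℝ e m : ℝ) = b / N := by
    rw [hm, ← integral_inner hxint e]
    have : ∀ x : Metric.sphere (0 : EuclideanSpace ℝ (Fin N)) 1,
        (inner ℝ e (x : EuclideanSpace ℝ (Fin N)) : ℝ) = t x := by
      intro x
      rw [he, EuclideanSpace.inner_single_left]
      simp [ht]
    rw [integral_congr_ae (Filter.Eventually.of_forall this), hsmul]
    have : ∀ x : Metric.sphere (0 : EuclideanSpace ℝ (Fin N)) 1,
        F x • t x = t x + b * (t x)^2 := by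
      intro x; simp only [hFdef, smul_eq_mul]; ring
    rw [integral_congr_ae (Filter.Eventually.of_forall this),
      integral_add h_t_int (h_t2_int.const_mul b), integral_const_mul,
      integral_coord_zero i0, integral_coord_sq hN1 i0]
    simp [mul_one_div]
    rw [div_eq_mul_inv]
  have hmlb : b / N ≤ ‖m‖ := by
    have h1 := real_inner_le_norm e m
    rw [hinner] at h1
    rw [he, EuclideanSpace.norm_single] at h1
    simpa using h1
  -- relative entropy computation
  have hac : ν ≪ sphereUniform N := withDensity_absolutelyContinuous _ _
  have hFmeas : Measurable (fun x => ENNReal.ofReal (F x)) :=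
    ENNReal.measurable_ofReal.comp hFcont.measurable
  have hrn : ν.rnDeriv (sphereUniform N) =ᶠ[ae (sphereUniform N)]
      (fun x => ENNReal.ofReal (F x)) := Measure.rnDeriv_withDensity _ hFmeas
  have hllrμ : llr ν (sphereUniform N) =ᶠ[ae (sphereUniform N)] (fun x => log (F x)) := by
    filter_upwards [hrn] with x hx
    rw [llr_def]
    simp only
    rw [hx, ENNReal.toReal_ofReal (hFnonneg x)]
  have hllrν : llr ν (sphereUniform N) =ᶠ[ae ν] (fun x => log (F x)) := hac.ae_eq hllrμ
  have hlogcont : Continuous (fun x => log (F x)) := hFcont.log (fun x => (hFpos x).ne')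
  have hllr_int : Integrable (llr ν (sphereUniform N)) ν := by
    refine Integrable.congr ?_ hllrν.symm
    exact hlogcont.integrable_of_hasCompactSupport (HasCompactSupport.of_compactSpace _)
  have hHval : ∫ x, llr ν (sphereUniform N) x ∂ν
      = ∫ x, F x * log (F x) ∂(sphereUniform N) := by
    rw [integral_congr_ae hllrν, hsmul]
    refine integral_congr_ae (Filter.Eventually.of_forall fun x => ?_)
    show F x • log (F x) = F x * log (F x)
    rw [smul_eq_mul]
  have hHle : ∫ x, F x * log (F x) ∂(sphereUniform N) ≤ b^2/(2*N) + b^3 := by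
    have hpt : ∀ x, F x * log (F x) ≤ b * t x + b^2 * (t x)^2/2 + b^3 := by
      intro x
      have h1 := ent_ineq (hbt x)
      have h2 : |b * t x|^3 ≤ b^3 := by
        rw [abs_mul, abs_of_pos hb0]
        calc (b * |t x|)^3 ≤ (b * 1)^3 := by
              apply pow_le_pow_left₀ (by positivity)
              exact mul_le_mul_of_nonneg_left (htabs x) hb0.le
        _ = b^3 := by ring
      have h3 : (b * t x)^2 = b^2 * (t x)^2 := by ring
      simp only [hFdef]
      nlinarith [h1, h2]
    have hRHSint : Integrable (fun x => b * t x + b^2 * (t x)^2/2 + b^3) (sphereUniform N) :=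
      (((h_t_int.const_mul b).add ((h_t2_int.const_mul (b^2)).div_const 2)).add
        (integrable_const (b^3)))
    have hLHSint : Integrable (fun x => F x * log (F x)) (sphereUniform N) :=
      integrable_of_continuous hN1 (hFcont.mul hlogcont)
    calc ∫ x, F x * log (F x) ∂(sphereUniform N)
        ≤ ∫ x, (b * t x + b^2 * (t x)^2/2 + b^3) ∂(sphereUniform N) :=
          integral_mono hLHSint hRHSint hpt
    _ = b^2/(2*N) + b^3 := by
        have e1 : ∫ x, (b * t x + b^2 * (t x)^2/2 + b^3) ∂(sphereUniform N)
            = (∫ x, (b * t x + b^2 * (t x)^2/2) ∂(sphereUniform N))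
              + ∫ _x, (b^3 : ℝ) ∂(sphereUniform N) :=
          integral_add ((h_t_int.const_mul b).add ((h_t2_int.const_mul (b^2)).div_const 2))
            (integrable_const (b^3))
        have e2 : ∫ x, (b * t x + b^2 * (t x)^2/2) ∂(sphereUniform N)
            = (∫ x, b * t x ∂(sphereUniform N)) + ∫ x, b^2 * (t x)^2/2 ∂(sphereUniform N) :=
          integral_add (h_t_int.const_mul b) ((h_t2_int.const_mul (b^2)).div_const 2)
        have e3 : ∫ x, b * t x ∂(sphereUniform N) = 0 := by
          rw [integral_const_mul, integral_coord_zero i0, mul_zero]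
        have e4 : ∫ x, b^2 * (t x)^2/2 ∂(sphereUniform N) = b^2/(2*N) := by
          rw [integral_div, integral_const_mul, integral_coord_sq hN1 i0]
          field_simp
        have e5 : ∫ _x, (b^3 : ℝ) ∂(sphereUniform N) = b^3 := by
          simp
        rw [e1, e2, e3, e4, e5]
        ring
  -- final arithmetic
  rw [relEntropy, if_pos ⟨hac, hllr_int⟩, EReal.coe_lt_coe_iff]
  have harith : b^2/(2*N) + b^3 < β/2 * (b/N)^2 := by
    have hkey : (N:ℝ)*b^2 + 2*N^2*b^3 < β*b^2 := by nlinarith [mul_pos hb0 hb0]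
    have hid : β/2 * (b/N)^2 - (b^2/(2*N) + b^3)
        = (β*b^2 - ((N:ℝ)*b^2 + 2*N^2*b^3))/(2*N^2) := by
      field_simp
    have hpos : 0 < (β*b^2 - ((N:ℝ)*b^2 + 2*N^2*b^3))/(2*N^2) :=
      div_pos (by linarith) (by positivity)
    linarith [hid ▸ hpos]
  have hfin : β/2 * (b/N)^2 ≤ β/2 * ‖m‖^2 := by
    apply mul_le_mul_of_nonneg_left _ (by linarith : (0:ℝ) ≤ β/2)
    apply pow_le_pow_left₀ (by positivity) hmlb
  calc (∫ x, llr ν (sphereUniform N) x ∂ν) = ∫ x, F x * log (F x) ∂(sphereUniform N) := hHval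
  _ ≤ b^2/(2*N) + b^3 := hHle
  _ < β/2 * (b/N)^2 := harith
  _ ≤ β/2 * ‖m‖^2 := hfin
end

section
/- With p and f = f_h as in the Stein equation for the critical density (k̃ = 1/(4N²(N+2))), if h is bounded then f is bounded; specifically there is a constant C(N) depending only on N such that ‖f‖_∞ ≤ C(N)‖h‖_∞. -/
open MeasureTheory Real Filter Set

/-- Normalizing constant of the critical density. -/
noncomputable def critZ (N : ℕ) : ℝ :=
  ∫ t in Set.Ioi (0 : ℝ),
    t ^ (((N : ℝ) - 2) / 2) * Real.exp (-(t ^ 2) / (4 * (N : ℝ) ^ 2 * ((N : ℝ) + 2)))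

/-- The critical limiting density `p(t) = z⁻¹ t^{(N-2)/2} e^{-t²/(4N²(N+2))}` for `t > 0`. -/
noncomputable def criticalDensity (N : ℕ) (t : ℝ) : ℝ :=
  if 0 < t then
    t ^ (((N : ℝ) - 2) / 2) * Real.exp (-(t ^ 2) / (4 * (N : ℝ) ^ 2 * ((N : ℝ) + 2))) / critZ N
  else 0

set_option maxHeartbeats 2000000 in
theorem stmt_15 (N : ℕ) (hN : 2 ≤ N) :
    ∃ C : ℝ, 0 < C ∧ ∀ h : ℝ → ℝ, Measurable h → ∀ M : ℝ, (∀ t, |h t| ≤ M) →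
      ∀ t : ℝ, 0 < t →
        |(∫ s in (0 : ℝ)..t,
            (h s - ∫ u in Set.Ioi (0 : ℝ), h u * criticalDensity N u) * criticalDensity N s)
          / (t * criticalDensity N t)| ≤ C * M := by
  set a : ℝ := ((N : ℝ) - 2) / 2 with ha_def
  set D : ℝ := 4 * (N : ℝ) ^ 2 * ((N : ℝ) + 2) with hD_def
  have hN2 : (2:ℝ) ≤ (N:ℝ) := by exact_mod_cast hN
  have hD : 0 < D := by positivity
  have hD2 : 2 ≤ D := by nlinarith
  have ha : 0 ≤ a := by simp only [ha_def]; linarith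
  set g : ℝ → ℝ := fun s => s ^ a * Real.exp (-(s ^ 2) / D) with hg_def
  have hg_int : IntegrableOn g (Ioi 0) := by
    have h1 := integrableOn_rpow_mul_exp_neg_mul_sq (b := D⁻¹) (by positivity) (s := a) (by linarith)
    refine h1.congr_fun (fun x hx => ?_) measurableSet_Ioi
    simp only [hg_def]
    congr 1
    congr 1
    field_simp
  have hg_pos : ∀ s : ℝ, 0 < s → 0 < g s := by
    intro s hs
    exact mul_pos (Real.rpow_pos_of_pos hs a) (Real.exp_pos _)
  have hz_eq : critZ N = ∫ s in Ioi (0:ℝ), g s := rfl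
  have hz : 0 < critZ N := by
    rw [hz_eq]
    rw [setIntegral_pos_iff_support_of_nonneg_ae]
    · have : Function.support g ∩ Ioi 0 = Ioi 0 := by
        apply inter_eq_right.2
        intro x hx
        exact (hg_pos x hx).ne'
      rw [this]
      simp
    · filter_upwards [ae_restrict_mem measurableSet_Ioi] with x hx
      exact (hg_pos x hx).le
    · exact hg_int
  have hp_eq : ∀ s : ℝ, 0 < s → criticalDensity N s = g s / critZ N := by
    intro s hs
    rw [criticalDensity, if_pos hs]
  have hp_nonneg : ∀ s : ℝ, 0 ≤ criticalDensity N s := by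
    intro s
    rcases lt_or_ge 0 s with hs | hs
    · rw [hp_eq s hs]; exact div_nonneg (hg_pos s hs).le hz.le
    · rw [criticalDensity, if_neg (not_lt.2 hs)]
  have hp_meas : Measurable (criticalDensity N) := by
    unfold criticalDensity
    refine Measurable.ite measurableSet_Ioi ?_ measurable_const
    fun_prop
  have hp_int : IntegrableOn (criticalDensity N) (Ioi 0) := by
    have h5 : IntegrableOn (fun x => g x / critZ N) (Ioi 0) :=
      Integrable.div_const hg_int (critZ N)
    exact MeasureTheory.IntegrableOn.congr_fun h5
      (fun x hx => (hp_eq x hx).symm) measurableSet_Ioi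
  have hp_one : (∫ s in Ioi (0:ℝ), criticalDensity N s) = 1 := by
    rw [setIntegral_congr_fun measurableSet_Ioi (fun x hx => hp_eq x hx), integral_div,
      ← hz_eq, div_self hz.ne']
  clear_value g
  clear_value a
  clear_value D
  set T : ℝ := (a + 1) * D / 2 with hT_def
  have hT1 : 1 ≤ T := by
    rw [hT_def]; nlinarith
  clear_value T
  refine ⟨2 * Real.exp (T ^ 2 / D), by positivity, ?_⟩
  intro h hmeas M hM t ht
  have hM0 : 0 ≤ M := (abs_nonneg _).trans (hM 0)
  set E : ℝ := ∫ u in Set.Ioi (0:ℝ), h u * criticalDensity N u with hE_def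
  clear_value E
  have hhp_int : IntegrableOn (fun u => h u * criticalDensity N u) (Ioi 0) := by
    refine (hp_int.const_mul M).mono' ((hmeas.mul hp_meas).aestronglyMeasurable) ?_
    filter_upwards [] with x
    rw [Real.norm_eq_abs, abs_mul, abs_of_nonneg (hp_nonneg x)]
    exact mul_le_mul_of_nonneg_right (hM x) (hp_nonneg x)
  have hE : |E| ≤ M := by
    rw [hE_def]
    have h1 : |(∫ u in Ioi (0:ℝ), h u * criticalDensity N u)| ≤ ∫ u in Ioi (0:ℝ), |h u * criticalDensity N u| := by
      simpa only [Real.norm_eq_abs] using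
        norm_integral_le_integral_norm (μ := volume.restrict (Ioi 0))
          (fun u => h u * criticalDensity N u)
    refine h1.trans ?_
    have h2 : (∫ u in Ioi (0:ℝ), |h u * criticalDensity N u|) ≤
        ∫ u in Ioi (0:ℝ), M * criticalDensity N u := by
      refine setIntegral_mono_on hhp_int.abs (hp_int.const_mul M) measurableSet_Ioi ?_
      intro x _
      rw [abs_mul, abs_of_nonneg (hp_nonneg x)]
      exact mul_le_mul_of_nonneg_right (hM x) (hp_nonneg x)
    refine h2.trans ?_
    rw [integral_const_mul, hp_one, mul_one]
  set F : ℝ → ℝ := fun s => (h s - E) * criticalDensity N s with hF_def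
  clear_value F
  have hF_bd : ∀ s, |F s| ≤ 2 * M * criticalDensity N s := by
    intro s
    rw [hF_def]
    simp only
    rw [abs_mul, abs_of_nonneg (hp_nonneg s)]
    refine mul_le_mul_of_nonneg_right ?_ (hp_nonneg s)
    calc |h s - E| ≤ |h s| + |E| := by
          simpa [sub_eq_add_neg] using abs_add_le (h s) (-E)
      _ ≤ M + M := add_le_add (hM s) hE
      _ = 2 * M := by ring
  have hF_meas : Measurable F := by
    rw [hF_def]
    exact (hmeas.sub measurable_const).mul hp_meas
  have hF_int : IntegrableOn F (Ioi 0) := by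
    refine (hp_int.const_mul (2 * M)).mono' hF_meas.aestronglyMeasurable ?_
    filter_upwards [] with x
    rw [Real.norm_eq_abs]
    exact hF_bd x
  have hF_total : (∫ s in Ioi (0:ℝ), F s) = 0 := by
    have : (∫ s in Ioi (0:ℝ), F s) =
        (∫ s in Ioi (0:ℝ), h s * criticalDensity N s) -
          ∫ s in Ioi (0:ℝ), E * criticalDensity N s := by
      rw [← integral_sub hhp_int (hp_int.const_mul E)]
      congr 1
      funext s
      rw [hF_def]
      ring
    rw [this, integral_const_mul, hp_one, ← hE_def]
    ring
  have hsplit : (∫ s in Ioc (0:ℝ) t, F s) + (∫ s in Ioi t, F s) = 0 := by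
    have hu := setIntegral_union (f := F) (μ := volume) (Set.Ioc_disjoint_Ioi le_rfl)
      measurableSet_Ioi (hF_int.mono_set Set.Ioc_subset_Ioi_self)
      (hF_int.mono_set (Set.Ioi_subset_Ioi ht.le))
    rw [Set.Ioc_union_Ioi_eq_Ioi ht.le] at hu
    rw [← hu]
    exact hF_total
  have hQ : 0 < t * criticalDensity N t := by
    refine mul_pos ht ?_
    rw [hp_eq t ht]
    exact div_pos (hg_pos t ht) hz
  rw [abs_div, abs_of_pos hQ, div_le_iff₀ hQ, intervalIntegral.integral_of_le ht.le]
  show |∫ s in Ioc (0:ℝ) t, F s| ≤ 2 * Real.exp (T ^ 2 / D) * M * (t * criticalDensity N t)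
  rcases le_or_gt t T with hcase | hcase
  · -- small t
    have h1 : |∫ s in Ioc (0:ℝ) t, F s| ≤ 2 * M * t ^ a / critZ N * t := by
      have hb : ∀ x ∈ Ioc (0:ℝ) t, ‖F x‖ ≤ 2 * M * t ^ a / critZ N := by
        intro x hx
        rw [Real.norm_eq_abs]
        refine (hF_bd x).trans ?_
        have hgx : g x ≤ t ^ a := by
          have h1 : x ^ a ≤ t ^ a := Real.rpow_le_rpow hx.1.le hx.2 ha
          have h2 : Real.exp (-(x ^ 2) / D) ≤ 1 := by
            rw [← Real.exp_zero]
            apply Real.exp_le_exp.2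
            rw [neg_div]
            have : 0 ≤ x ^ 2 / D := div_nonneg (sq_nonneg x) hD.le
            linarith
          calc g x = x ^ a * Real.exp (-(x ^ 2) / D) := by rw [hg_def]
            _ ≤ t ^ a * 1 := mul_le_mul h1 h2 (Real.exp_pos _).le (Real.rpow_nonneg ht.le a)
            _ = t ^ a := mul_one _
        rw [hp_eq x hx.1]
        refine le_trans (mul_le_mul_of_nonneg_left
          (div_le_div_of_nonneg_right hgx hz.le) (by linarith)) (le_of_eq (by ring))
      have h2 := norm_setIntegral_le_of_norm_le_const (μ := volume) (s := Ioc (0:ℝ) t)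
        measure_Ioc_lt_top hb
      rw [Real.volume_real_Ioc_of_le ht.le, sub_zero] at h2
      simpa [Real.norm_eq_abs] using h2
    refine h1.trans ?_
    have hexp : 1 ≤ Real.exp (T ^ 2 / D) * Real.exp (-(t ^ 2) / D) := by
      rw [← Real.exp_add, ← Real.exp_zero]
      apply Real.exp_le_exp.2
      have htT : t ^ 2 ≤ T ^ 2 := by nlinarith
      have e0 : 0 ≤ (T ^ 2 - t ^ 2) / D := div_nonneg (by linarith) hD.le
      have e1 : (T ^ 2 - t ^ 2) / D = T ^ 2 / D - t ^ 2 / D := sub_div _ _ _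
      have e2 : -(t ^ 2) / D = -(t ^ 2 / D) := neg_div _ _
      linarith
    have hP : (0:ℝ) ≤ 2 * M * t ^ a * t / critZ N := by
      apply div_nonneg _ hz.le
      have h3 : (0:ℝ) ≤ t ^ a := Real.rpow_nonneg ht.le a
      exact mul_nonneg (mul_nonneg (mul_nonneg (by norm_num) hM0) h3) ht.le
    have hgt : g t = t ^ a * Real.exp (-(t ^ 2) / D) := by rw [hg_def]
    rw [hp_eq t ht, hgt]
    calc 2 * M * t ^ a / critZ N * t = 2 * M * t ^ a * t / critZ N * 1 := by ring
      _ ≤ 2 * M * t ^ a * t / critZ N * (Real.exp (T ^ 2 / D) * Real.exp (-(t ^ 2) / D)) :=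
          mul_le_mul_of_nonneg_left hexp hP
      _ = 2 * Real.exp (T ^ 2 / D) * M *
          (t * (t ^ a * Real.exp (-(t ^ 2) / D) / critZ N)) := by ring
  · -- large t
    have h1t : 1 ≤ t := hT1.trans hcase.le
    have hnum : (∫ s in Ioc (0:ℝ) t, F s) = -∫ s in Ioi t, F s := by linarith
    have hFt_int : IntegrableOn F (Ioi t) := hF_int.mono_set (Set.Ioi_subset_Ioi ht.le)
    set K : ℝ := 2 * M * (t ^ a * Real.exp (-(t ^ 2) / D)) / critZ N with hK_def
    clear_value K
    have hK0 : 0 ≤ K := by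
      rw [hK_def]
      apply div_nonneg _ hz.le
      have h3 : (0:ℝ) ≤ t ^ a := Real.rpow_nonneg ht.le a
      have h4 := (Real.exp_pos (-(t ^ 2) / D)).le
      exact mul_nonneg (mul_nonneg (by norm_num) hM0) (mul_nonneg h3 h4)
    have hEint : IntegrableOn (fun s : ℝ => K * Real.exp (-(s - t))) (Ioi t) := by
      have hbase : IntegrableOn (fun s : ℝ => Real.exp (-(s - t))) (Ioi t) := by
        have h5 : IntegrableOn (fun x : ℝ => Real.exp t * Real.exp (-1 * x)) (Ioi t) :=
          (exp_neg_integrableOn_Ioi t (b := 1) one_pos).const_mul (Real.exp t)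
        refine MeasureTheory.IntegrableOn.congr_fun h5 (fun x _ => ?_) measurableSet_Ioi
        rw [← Real.exp_add]
        congr 1
        ring
      exact hbase.const_mul K
    have hEval : (∫ s in Ioi t, Real.exp (-(s - t))) = 1 := by
      have hcong : ∀ s : ℝ, Real.exp (-(s - t)) = Real.exp t * Real.exp (-s) := by
        intro s
        rw [← Real.exp_add]
        ring_nf
      simp_rw [hcong]
      rw [integral_const_mul, integral_exp_neg_Ioi, ← Real.exp_add]
      simp
    have hptw : ∀ x ∈ Ioi t, |F x| ≤ K * Real.exp (-(x - t)) := by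
      intro x hx
      have hxt : t ≤ x := (mem_Ioi.1 hx).le
      have hx0 : 0 < x := lt_of_lt_of_le ht hxt
      refine (hF_bd x).trans ?_
      rw [hp_eq x hx0]
      have hgkey : g x ≤ t ^ a * Real.exp (-(t ^ 2) / D) * Real.exp (-(x - t)) := by
        have step1 : x ^ a ≤ t ^ a * Real.exp (a * (x - t)) := by
          have hle : x ≤ t * Real.exp (x - t) := by
            nlinarith [Real.add_one_le_exp (x - t)]
          calc x ^ a ≤ (t * Real.exp (x - t)) ^ a := Real.rpow_le_rpow hx0.le hle ha
            _ = t ^ a * Real.exp (x - t) ^ a :=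
                Real.mul_rpow (by linarith) (Real.exp_pos _).le
            _ = t ^ a * Real.exp (a * (x - t)) := by
                rw [← Real.exp_mul, mul_comm (x - t) a]
        have step2 : Real.exp (-(x ^ 2) / D) ≤
            Real.exp (-(t ^ 2) / D) * Real.exp (-(2 * t / D) * (x - t)) := by
          rw [← Real.exp_add]
          apply Real.exp_le_exp.2
          have hsq : t ^ 2 + 2 * t * (x - t) ≤ x ^ 2 := by nlinarith
          have e3 : -(x ^ 2) / D ≤ (-(t ^ 2) - 2 * t * (x - t)) / D :=
            div_le_div_of_nonneg_right (by linarith) hD.le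
          have e4 : (-(t ^ 2) - 2 * t * (x - t)) / D =
              -(t ^ 2) / D + -(2 * t / D) * (x - t) := by
            field_simp
            ring
          linarith
        have step3 : Real.exp (a * (x - t)) * Real.exp (-(2 * t / D) * (x - t)) ≤
            Real.exp (-(x - t)) := by
          rw [← Real.exp_add]
          apply Real.exp_le_exp.2
          have hta : a + 1 ≤ 2 * t / D := by
            rw [le_div_iff₀ hD]
            nlinarith
          nlinarith
        calc g x = x ^ a * Real.exp (-(x ^ 2) / D) := by rw [hg_def]
          _ ≤ (t ^ a * Real.exp (a * (x - t))) *
              (Real.exp (-(t ^ 2) / D) * Real.exp (-(2 * t / D) * (x - t))) := by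
              refine mul_le_mul step1 step2 (Real.exp_pos _).le ?_
              exact mul_nonneg (Real.rpow_nonneg ht.le a) (Real.exp_pos _).le
          _ = t ^ a * Real.exp (-(t ^ 2) / D) *
              (Real.exp (a * (x - t)) * Real.exp (-(2 * t / D) * (x - t))) := by ring
          _ ≤ t ^ a * Real.exp (-(t ^ 2) / D) * Real.exp (-(x - t)) := by
              refine mul_le_mul_of_nonneg_left step3 ?_
              exact mul_nonneg (Real.rpow_nonneg ht.le a) (Real.exp_pos _).le
      rw [hK_def]
      calc 2 * M * (g x / critZ N)
          ≤ 2 * M * (t ^ a * Real.exp (-(t ^ 2) / D) * Real.exp (-(x - t)) / critZ N) := by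
            exact mul_le_mul_of_nonneg_left (div_le_div_of_nonneg_right hgkey hz.le) (by linarith)
        _ = 2 * M * (t ^ a * Real.exp (-(t ^ 2) / D)) / critZ N * Real.exp (-(x - t)) := by
            ring
    have htail : |∫ s in Ioi t, F s| ≤ K := by
      calc |∫ s in Ioi t, F s| ≤ ∫ s in Ioi t, |F s| := by
            simpa [Real.norm_eq_abs] using
              norm_integral_le_integral_norm (μ := volume.restrict (Ioi t)) F
        _ ≤ ∫ s in Ioi t, K * Real.exp (-(s - t)) :=
            setIntegral_mono_on hFt_int.abs hEint measurableSet_Ioi hptw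
        _ = K * ∫ s in Ioi t, Real.exp (-(s - t)) := integral_const_mul K _
        _ = K := by rw [hEval, mul_one]
    have hexpT : 1 ≤ Real.exp (T ^ 2 / D) := by
      rw [← Real.exp_zero]
      apply Real.exp_le_exp.2
      exact div_nonneg (sq_nonneg T) hD.le
    have hgt : g t = t ^ a * Real.exp (-(t ^ 2) / D) := by rw [hg_def]
    rw [hnum, abs_neg]
    refine htail.trans ?_
    rw [hp_eq t ht, hgt]
    calc K = K * (1 * 1) := by ring
      _ ≤ K * (Real.exp (T ^ 2 / D) * t) := by
          refine mul_le_mul_of_nonneg_left ?_ hK0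
          exact mul_le_mul hexpT h1t zero_le_one (le_trans zero_le_one hexpT)
      _ = 2 * Real.exp (T ^ 2 / D) * M *
          (t * (t ^ a * Real.exp (-(t ^ 2) / D) / critZ N)) := by
          rw [hK_def]; ring
end

section
/- For integer N ≥ 2, b > 0 and β = b·I_{N/2-1}(b)/I_{N/2}(b) (i.e. the supercritical relation b = β f(b)), the quantity 1 - ((N-1)/b)·f(b) - f(b)², where f(b) = I_{N/2}(b)/I_{N/2-1}(b), is strictly positive. -/
open MeasureTheory Real Filter Asymptotics Set

noncomputable def ffp (x : ℝ) (n : ℕ) : ℝ := ∏ r ∈ Finset.range n, (x - r)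

lemma ffp_zero (x : ℝ) : ffp x 0 = 1 := by simp [ffp]

lemma ffp_succ (x : ℝ) (n : ℕ) : ffp x (n+1) = ffp x n * (x - n) := by
  simp [ffp, Finset.prod_range_succ]

lemma ffp_succ' (x : ℝ) (n : ℕ) : ffp x (n+1) = x * ffp (x-1) n := by
  rw [ffp, Finset.prod_range_succ']
  simp only [Nat.cast_zero, sub_zero]
  rw [mul_comm]
  congr 1
  apply Finset.prod_congr rfl
  intro i _
  push_cast; ring

lemma ffp_pos {x : ℝ} {n : ℕ} (h : (n:ℝ) - 1 < x) : 0 < ffp x n := by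
  apply Finset.prod_pos
  intro i hi
  simp only [Finset.mem_range] at hi
  have : (i:ℝ) + 1 ≤ n := by exact_mod_cast hi
  linarith

lemma vand_ffp (k : ℕ) (x y : ℝ) :
    ∑ i ∈ Finset.range (k+1), (k.choose i : ℝ) * ffp x i * ffp y (k-i) = ffp (x+y) k := by
  induction k generalizing x y with
  | zero => simp [ffp_zero]
  | succ k ih =>
    have step1 : ∑ i ∈ Finset.range (k+2), ((k+1).choose i : ℝ) * ffp x i * ffp y (k+1-i)
        = ∑ i ∈ Finset.range (k+1),
            (((k.choose i : ℝ) + (k.choose (i+1) : ℝ)) * ffp x (i+1) * ffp y (k-i))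
          + (k+1).choose 0 * ffp x 0 * ffp y (k+1) := by
      rw [Finset.sum_range_succ' (fun i => ((k+1).choose i : ℝ) * ffp x i * ffp y (k+1-i)) (k+1)]
      congr 1
      apply Finset.sum_congr rfl
      intro i _
      have h1 : k + 1 - (i+1) = k - i := by omega
      rw [h1, Nat.choose_succ_succ]
      push_cast; ring
    have step2 : ∑ i ∈ Finset.range (k+1), ((k.choose (i+1)) : ℝ) * ffp x (i+1) * ffp y (k-i)
          + ((k+1).choose 0 : ℝ) * ffp x 0 * ffp y (k+1)
        = ∑ i ∈ Finset.range (k+1), (k.choose i : ℝ) * ffp x i * ffp y (k+1-i) := by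
      rw [Finset.sum_range_succ' (fun i => (k.choose i : ℝ) * ffp x i * ffp y (k+1-i)) k]
      rw [Finset.sum_range_succ]
      simp [Nat.choose_succ_self, ffp_zero]
    have step3 : ∀ i ∈ Finset.range (k+1),
        (k.choose i : ℝ) * ffp x (i+1) * ffp y (k-i)
          + (k.choose i : ℝ) * ffp x i * ffp y (k+1-i)
        = ((k.choose i : ℝ) * ffp x i * ffp y (k-i)) * (x + y - k) := by
      intro i hi
      simp only [Finset.mem_range] at hi
      have hik : i ≤ k := by omega
      have h2 : k + 1 - i = (k-i) + 1 := by omega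
      have hc : ((k - i : ℕ) : ℝ) = (k:ℝ) - i := by
        push_cast [hik]; ring
      rw [h2, ffp_succ, ffp_succ, hc]
      ring
    calc ∑ i ∈ Finset.range (k+2), ((k+1).choose i : ℝ) * ffp x i * ffp y (k+1-i)
        = ∑ i ∈ Finset.range (k+1),
            ((k.choose i : ℝ) * ffp x (i+1) * ffp y (k-i)
              + (k.choose i : ℝ) * ffp x i * ffp y (k+1-i)) := by
          have expand : ∀ i ∈ Finset.range (k+1),
              ((k.choose i : ℝ) + (k.choose (i+1):ℝ)) * ffp x (i+1) * ffp y (k-i)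
              = (k.choose i : ℝ) * ffp x (i+1) * ffp y (k-i)
                + (k.choose (i+1) : ℝ) * ffp x (i+1) * ffp y (k-i) := fun i _ => by ring
          rw [step1, Finset.sum_congr rfl expand, Finset.sum_add_distrib, add_assoc, step2,
            ← Finset.sum_add_distrib]
      _ = (∑ i ∈ Finset.range (k+1), (k.choose i : ℝ) * ffp x i * ffp y (k-i)) * (x + y - k) := by
          rw [Finset.sum_congr rfl step3, ← Finset.sum_mul]
      _ = ffp (x+y) (k+1) := by rw [ih, ffp_succ]

lemma Gamma_add_nat' (x : ℝ) (hx : 0 < x) (n : ℕ) :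
    Real.Gamma (x + n) = ffp (x + n - 1) n * Real.Gamma x := by
  induction n with
  | zero => simp [ffp_zero]
  | succ n ih =>
    have hxn : x + (n:ℕ) ≠ 0 := by positivity
    have : x + ((n+1 : ℕ):ℝ) = (x + n) + 1 := by push_cast; ring
    rw [this, Real.Gamma_add_one hxn, ih]
    have e1 : x + (n:ℝ) + 1 - 1 = x + (n:ℝ) := by ring
    rw [e1, ffp_succ']
    have e2 : x + (n:ℝ) - 1 = x + ((n:ℕ):ℝ) - 1 := by norm_num
    ring

/-- key Vandermonde/Gauss identity for Gamma quotients -/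
lemma W_id (k : ℕ) (a b : ℝ) (ha : 1 ≤ a) (hb : 1 ≤ b) :
    ∑ i ∈ Finset.range (k+1),
        1 / ((i.factorial : ℝ) * ((k-i).factorial : ℝ) * Real.Gamma (a+i) * Real.Gamma (b+(k-i : ℕ)))
      = Real.Gamma (a+b+2*k-1)
        / ((k.factorial : ℝ) * Real.Gamma (a+k) * Real.Gamma (b+k) * Real.Gamma (a+b+k-1)) := by
  have ha0 : (0:ℝ) < a := by linarith
  have hb0 : (0:ℝ) < b := by linarith
  have hGa : ∀ (c : ℝ), 0 < c → ∀ m : ℕ, 0 < Real.Gamma (c + m) := by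
    intro c hc m; apply Real.Gamma_pos_of_pos; positivity
  -- termwise rewrite
  have term : ∀ i ∈ Finset.range (k+1),
      1 / ((i.factorial : ℝ) * ((k-i).factorial : ℝ) * Real.Gamma (a+i) * Real.Gamma (b+(k-i : ℕ)))
      = ((k.choose i : ℝ) * ffp (b+k-1) i * ffp (a+k-1) (k-i))
        / ((k.factorial : ℝ) * Real.Gamma (a+k) * Real.Gamma (b+k)) := by
    intro i hi
    simp only [Finset.mem_range] at hi
    have hik : i ≤ k := by omega
    -- Gamma (a+k) = ffp (a+k-1) (k-i) * Gamma (a+i)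
    have hA : Real.Gamma (a+k) = ffp (a+k-1) (k-i) * Real.Gamma (a+i) := by
      have := Gamma_add_nat' (a+i) (by positivity) (k-i)
      have hcast : (a+i) + ((k-i:ℕ):ℝ) = a + k := by
        push_cast [hik]; ring
      rw [hcast] at this
      exact this
    have hB : Real.Gamma (b+k) = ffp (b+k-1) i * Real.Gamma (b+(k-i:ℕ)) := by
      have := Gamma_add_nat' (b+(k-i:ℕ)) (by positivity) i
      have hcast : (b+((k-i:ℕ):ℝ)) + (i:ℝ) = b + k := by
        push_cast [hik]; ring
      rw [hcast] at this
      exact this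
    have hfact : (k.factorial : ℝ) = (k.choose i : ℝ) * i.factorial * (k-i).factorial := by
      exact_mod_cast (Nat.choose_mul_factorial_mul_factorial hik).symm
    have h1 : (0:ℝ) < Real.Gamma (a+i) := hGa a ha0 i
    have h2 : (0:ℝ) < Real.Gamma (b+(k-i:ℕ)) := hGa b hb0 (k-i)
    have h3 : (0:ℝ) < (i.factorial : ℝ) := by positivity
    have h4 : (0:ℝ) < ((k-i).factorial : ℝ) := by positivity
    have hg2 : (0:ℝ) < Real.Gamma (a+k) := hGa a ha0 k
    have hg3 : (0:ℝ) < Real.Gamma (b+k) := hGa b hb0 k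
    have hg4 : (0:ℝ) < (k.factorial : ℝ) := by positivity
    rw [div_eq_div_iff (by positivity) (by positivity)]
    rw [hA, hB, hfact]
    ring
  rw [Finset.sum_congr rfl term]
  rw [← Finset.sum_div]
  have hsum : ∑ i ∈ Finset.range (k+1), (k.choose i : ℝ) * ffp (b+k-1) i * ffp (a+k-1) (k-i)
      = ffp (a+b+2*k-2) k := by
    rw [vand_ffp k (b+k-1) (a+k-1)]
    congr 1
    ring
  rw [hsum]
  have hff : ffp (a+b+2*k-2) k = Real.Gamma (a+b+2*k-1) / Real.Gamma (a+b+k-1) := by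
    have h0 : (0:ℝ) < a+b+k-1 := by
      have : (0:ℝ) ≤ k := Nat.cast_nonneg k
      linarith
    have := Gamma_add_nat' (a+b+k-1) h0 k
    have hc1 : (a+b+k-1) + (k:ℝ) = a+b+2*k-1 := by ring
    rw [hc1] at this
    have hc2 : a+b+2*(k:ℝ)-1-1 = a+b+2*k-2 := by ring
    rw [hc2] at this
    have hg : (0:ℝ) < Real.Gamma (a+b+k-1) := Real.Gamma_pos_of_pos h0
    rw [this]
    field_simp
  rw [hff]
  have hg1 : (0:ℝ) < Real.Gamma (a+b+k-1) := Real.Gamma_pos_of_pos (by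
    have : (0:ℝ) ≤ k := Nat.cast_nonneg k
    linarith)
  have hg2 : (0:ℝ) < Real.Gamma (a+k) := hGa a ha0 k
  have hg3 : (0:ℝ) < Real.Gamma (b+k) := hGa b hb0 k
  have hg4 : (0:ℝ) < (k.factorial : ℝ) := by positivity
  rw [div_div]
  ring

noncomputable def cc (a : ℝ) (i : ℕ) : ℝ := 1 / ((i.factorial : ℝ) * Real.Gamma (a + i))

lemma cc_pos {a : ℝ} (ha : 0 < a) (i : ℕ) : 0 < cc a i := by
  have h1 : (0:ℝ) < a + i := by
    have : (0:ℝ) ≤ (i:ℝ) := Nat.cast_nonneg i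
    linarith
  have h2 := Real.Gamma_pos_of_pos h1
  have h3 : (0:ℝ) < (i.factorial : ℝ) := by positivity
  unfold cc; positivity

lemma cc_mul (a₁ a₂ : ℝ) (i j : ℕ) :
    cc a₁ i * cc a₂ j
      = 1 / ((i.factorial : ℝ) * (j.factorial : ℝ) * Real.Gamma (a₁+i) * Real.Gamma (a₂+j)) := by
  unfold cc
  rw [div_mul_div_comm, one_mul]
  ring_nf

noncomputable def EE (ν : ℝ) : ℕ → ℝ
  | 0 => 0
  | (m+1) => ∑ i ∈ Finset.range (m+1), cc (ν+1) i * cc (ν+1) (m-i)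

lemma Phi_pos (ν : ℝ) (hν : 1 ≤ ν) (n : ℕ) :
    0 < 2 * (∑ i ∈ Finset.range (n+1), cc ν i * cc ν (n-i))
      - (2*ν-1) * (∑ i ∈ Finset.range (n+1), cc ν i * cc (ν+1) (n-i))
      - 2 * (EE ν n) := by
  have hν0 : (0:ℝ) < ν := by linarith
  have hΓν : (0:ℝ) < Real.Gamma ν := Real.Gamma_pos_of_pos hν0
  cases n with
  | zero =>
    simp only [EE, zero_add, Finset.sum_range_one, Nat.sub_zero, cc, Nat.factorial_zero,
      Nat.cast_one, Nat.cast_zero, add_zero, one_mul, mul_zero, sub_zero]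
    have hg1 : Real.Gamma (ν+1) = ν * Real.Gamma ν := by
      rw [Real.Gamma_add_one (ne_of_gt hν0)]
    rw [hg1]
    have key : 2 * (1 / Real.Gamma ν * (1 / Real.Gamma ν))
        - (2*ν-1) * (1 / Real.Gamma ν * (1 / (ν * Real.Gamma ν)))
        = 1 / (ν * Real.Gamma ν ^ 2) := by
      field_simp
      ring
    rw [key]
    positivity
  | succ m =>
    -- closed forms via W_id
    have hν1 : (1:ℝ) ≤ ν + 1 := by linarith
    have hC := W_id (m+1) ν ν hν hν
    have hM := W_id (m+1) ν (ν+1) hν hν1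
    have hE := W_id m (ν+1) (ν+1) hν1 hν1
    have hC' : (∑ i ∈ Finset.range (m+1+1), cc ν i * cc ν (m+1-i))
        = Real.Gamma (2*ν+2*m+1)
          / (((m+1).factorial : ℝ) * Real.Gamma (ν+m+1) * Real.Gamma (ν+m+1)
              * Real.Gamma (2*ν+m)) := by
      rw [Finset.sum_congr rfl (fun i _ => cc_mul ν ν i (m+1-i)), hC]
      push_cast
      ring_nf
    have hM' : (∑ i ∈ Finset.range (m+1+1), cc ν i * cc (ν+1) (m+1-i))
        = Real.Gamma (2*ν+2*m+2)
          / (((m+1).factorial : ℝ) * Real.Gamma (ν+m+1) * Real.Gamma (ν+m+2)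
              * Real.Gamma (2*ν+m+1)) := by
      rw [Finset.sum_congr rfl (fun i _ => cc_mul ν (ν+1) i (m+1-i)), hM]
      push_cast
      ring_nf
    have hE' : EE ν (m+1)
        = Real.Gamma (2*ν+2*m+1)
          / ((m.factorial : ℝ) * Real.Gamma (ν+m+1) * Real.Gamma (ν+m+1)
              * Real.Gamma (2*ν+m+1)) := by
      show (∑ i ∈ Finset.range (m+1), cc (ν+1) i * cc (ν+1) (m-i)) = _
      rw [Finset.sum_congr rfl (fun i _ => cc_mul (ν+1) (ν+1) i (m-i)), hE]
      push_cast
      ring_nf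
    -- Gamma recurrences
    have rA : Real.Gamma (2*ν+2*m+2) = (2*ν+2*m+1) * Real.Gamma (2*ν+2*m+1) := by
      have h : (2*ν+2*(m:ℝ)+1) ≠ 0 := by positivity
      have := Real.Gamma_add_one h
      have e : 2*ν+2*(m:ℝ)+1+1 = 2*ν+2*m+2 := by ring
      rw [e] at this
      exact this
    have rB : Real.Gamma (2*ν+m+1) = (2*ν+m) * Real.Gamma (2*ν+m) := by
      have h : (2*ν+(m:ℝ)) ≠ 0 := by positivity
      have := Real.Gamma_add_one h
      have e : 2*ν+(m:ℝ)+1 = 2*ν+m+1 := by ring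
      rw [e] at this
      exact this
    have rC : Real.Gamma (ν+m+2) = (ν+m+1) * Real.Gamma (ν+m+1) := by
      have h : (ν+(m:ℝ)+1) ≠ 0 := by positivity
      have := Real.Gamma_add_one h
      have e : ν+(m:ℝ)+1+1 = ν+m+2 := by ring
      rw [e] at this
      exact this
    have rD : (((m+1).factorial : ℕ) : ℝ) = ((m:ℝ)+1) * (m.factorial : ℝ) := by
      rw [Nat.factorial_succ]
      push_cast
      ring
    -- positive atoms
    have p1 : (0:ℝ) < Real.Gamma (2*ν+2*m+1) := Real.Gamma_pos_of_pos (by positivity)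
    have p2 : (0:ℝ) < Real.Gamma (ν+m+1) := Real.Gamma_pos_of_pos (by positivity)
    have p3 : (0:ℝ) < Real.Gamma (2*ν+m) := Real.Gamma_pos_of_pos (by positivity)
    have p4 : (0:ℝ) < (m.factorial : ℝ) := by positivity
    have p5 : (0:ℝ) < (m:ℝ)+1 := by positivity
    have p6 : (0:ℝ) < 2*ν+(m:ℝ) := by positivity
    have p7 : (0:ℝ) < ν+(m:ℝ)+1 := by positivity
    have p8 : (0:ℝ) < 2*ν-1 := by linarith
    have key : 2 * (∑ i ∈ Finset.range (m+1+1), cc ν i * cc ν (m+1-i))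
        - (2*ν-1) * (∑ i ∈ Finset.range (m+1+1), cc ν i * cc (ν+1) (m+1-i))
        - 2 * (EE ν (m+1))
        = (2*ν-1) * Real.Gamma (2*ν+2*m+1)
          / (((m:ℝ)+1) * (m.factorial : ℝ) * Real.Gamma (ν+m+1)^2 * Real.Gamma (2*ν+m)
              * (2*ν+m) * (ν+m+1)) := by
      rw [hC', hM', hE', rA, rB, rC, rD]
      field_simp
      ring
    rw [key]
    positivity

lemma summable_cc {a s : ℝ} (ha : 1 ≤ a) (hs : 0 ≤ s) :
    Summable (fun i : ℕ => s^i * cc a i) := by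
  have ha0 : (0:ℝ) < a := by linarith
  apply summable_of_ratio_norm_eventually_le (r := 1/2) (by norm_num)
  filter_upwards [Filter.eventually_ge_atTop (⌈2*s⌉₊)] with n hn
  have hpos : ∀ m : ℕ, (0:ℝ) < s^m * cc a m ∨ s^m * cc a m = 0 ∨ 0 ≤ s^m * cc a m := by
    intro m; right; right; exact mul_nonneg (pow_nonneg hs m) (cc_pos ha0 m).le
  have h0 : (0:ℝ) ≤ s^n * cc a n := mul_nonneg (pow_nonneg hs n) (cc_pos ha0 n).le
  have h1 : (0:ℝ) ≤ s^(n+1) * cc a (n+1) := mul_nonneg (pow_nonneg hs (n+1)) (cc_pos ha0 (n+1)).le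
  rw [Real.norm_of_nonneg h1, Real.norm_of_nonneg h0]
  have han : (0:ℝ) < a + n := by
    have : (0:ℝ) ≤ (n:ℝ) := Nat.cast_nonneg n
    linarith
  have hre : s^(n+1) * cc a (n+1) = (s^n * cc a n) * (s / (((n:ℝ)+1) * (a+n))) := by
    unfold cc
    have hg : Real.Gamma (a + (n+1:ℕ)) = (a+n) * Real.Gamma (a+n) := by
      have := Real.Gamma_add_one (ne_of_gt han)
      have e : a + ((n+1:ℕ):ℝ) = (a + n) + 1 := by push_cast; ring
      rw [e, this]
    rw [hg, Nat.factorial_succ]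
    have hΓ : Real.Gamma (a+n) ≠ 0 := ne_of_gt (Real.Gamma_pos_of_pos han)
    have hf : ((n.factorial : ℕ):ℝ) ≠ 0 := by positivity
    push_cast
    field_simp
    ring
  rw [hre]
  have hb : s / (((n:ℝ)+1) * (a+n)) ≤ 1/2 := by
    have h2s : 2*s ≤ (n:ℝ) := by
      calc 2*s ≤ (⌈2*s⌉₊ : ℝ) := Nat.le_ceil _
        _ ≤ n := by exact_mod_cast hn
    have hd : ((n:ℝ)+1) ≤ ((n:ℝ)+1) * (a+n) := by
      nlinarith [Nat.cast_nonneg (α := ℝ) n]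
    have hdpos : (0:ℝ) < ((n:ℝ)+1) * (a+n) := by positivity
    rw [div_le_div_iff₀ hdpos (by norm_num)]
    nlinarith [Nat.cast_nonneg (α := ℝ) n]
  calc (s^n * cc a n) * (s / (((n:ℝ)+1) * (a+n)))
      ≤ (s^n * cc a n) * (1/2) := by
        apply mul_le_mul_of_nonneg_left hb h0
    _ = 1/2 * (s^n * cc a n) := by ring

lemma summable_norm_cc {a s : ℝ} (ha : 1 ≤ a) (hs : 0 ≤ s) :
    Summable (fun i : ℕ => ‖s^i * cc a i‖) := by
  have ha0 : (0:ℝ) < a := by linarith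
  have : (fun i : ℕ => ‖s^i * cc a i‖) = fun i : ℕ => s^i * cc a i := by
    funext i
    exact Real.norm_of_nonneg (mul_nonneg (pow_nonneg hs i) (cc_pos ha0 i).le)
  rw [this]
  exact summable_cc ha hs

lemma besselI_repr (μ : ℝ) (hμ : 0 < μ + 1) {b : ℝ} (hb : 0 < b) :
    besselI μ b = (b/2)^μ * ∑' m : ℕ, ((b/2)^2)^m * cc (μ+1) m := by
  rw [besselI, ← tsum_mul_left]
  congr 1
  funext m
  have ht : (0:ℝ) < b/2 := by linarith
  have h1 : (b/2) ^ (2*(m:ℝ)+μ) = (b/2)^(2*m : ℕ) * (b/2)^μ := by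
    rw [Real.rpow_add ht]
    congr 1
    rw [← Real.rpow_natCast (b/2) (2*m)]
    congr 1
    push_cast
    ring
  rw [h1, pow_mul]
  have h2 : Real.Gamma ((m:ℝ) + μ + 1) = Real.Gamma ((μ+1) + m) := by
    congr 1
    ring
  rw [h2]
  unfold cc
  have hΓ : Real.Gamma ((μ+1) + m) ≠ 0 := by
    have : (0:ℝ) < (μ+1) + m := by
      have : (0:ℝ) ≤ (m:ℝ) := Nat.cast_nonneg m
      linarith
    exact ne_of_gt (Real.Gamma_pos_of_pos this)
  have hf : ((m.factorial : ℕ):ℝ) ≠ 0 := by positivity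
  field_simp

lemma KEY_pos (ν : ℝ) (hν : 1 ≤ ν) (s : ℝ) (hs : 0 < s) :
    0 < 2 * ((∑' i : ℕ, s^i * cc ν i) * (∑' i : ℕ, s^i * cc ν i))
      - (2*ν-1) * ((∑' i : ℕ, s^i * cc ν i) * (∑' i : ℕ, s^i * cc (ν+1) i))
      - 2 * (s * ((∑' i : ℕ, s^i * cc (ν+1) i) * (∑' i : ℕ, s^i * cc (ν+1) i))) := by
  have hν1 : (1:ℝ) ≤ ν + 1 := by linarith
  have hnf : Summable (fun i : ℕ => ‖s^i * cc ν i‖) := summable_norm_cc hν hs.le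
  have hng : Summable (fun i : ℕ => ‖s^i * cc (ν+1) i‖) := summable_norm_cc hν1 hs.le
  -- diagonal rewriting
  have ediag : ∀ (a₁ a₂ : ℝ) (n : ℕ),
      ∑ k ∈ Finset.range (n+1), (s^k * cc a₁ k) * (s^(n-k) * cc a₂ (n-k))
        = s^n * ∑ k ∈ Finset.range (n+1), cc a₁ k * cc a₂ (n-k) := by
    intro a₁ a₂ n
    rw [Finset.mul_sum]
    apply Finset.sum_congr rfl
    intro k hk
    simp only [Finset.mem_range] at hk
    have hkn : k ≤ n := by omega
    have hpow : s^k * s^(n-k) = s^n := by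
      rw [← pow_add]
      congr 1
      omega
    calc (s^k * cc a₁ k) * (s^(n-k) * cc a₂ (n-k))
        = (s^k * s^(n-k)) * (cc a₁ k * cc a₂ (n-k)) := by ring
      _ = s^n * (cc a₁ k * cc a₂ (n-k)) := by rw [hpow]
  have Hyy : HasSum (fun n => s^n * ∑ k ∈ Finset.range (n+1), cc ν k * cc ν (n-k))
      ((∑' i : ℕ, s^i * cc ν i) * (∑' i : ℕ, s^i * cc ν i)) := by
    have H := hasSum_sum_range_mul_of_summable_norm hnf hnf
    simp only [ediag ν ν] at H
    exact H
  have Hyx : HasSum (fun n => s^n * ∑ k ∈ Finset.range (n+1), cc ν k * cc (ν+1) (n-k))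
      ((∑' i : ℕ, s^i * cc ν i) * (∑' i : ℕ, s^i * cc (ν+1) i)) := by
    have H := hasSum_sum_range_mul_of_summable_norm hnf hng
    simp only [ediag ν (ν+1)] at H
    exact H
  have Hxx : HasSum (fun n => s^n * ∑ k ∈ Finset.range (n+1), cc (ν+1) k * cc (ν+1) (n-k))
      ((∑' i : ℕ, s^i * cc (ν+1) i) * (∑' i : ℕ, s^i * cc (ν+1) i)) := by
    have H := hasSum_sum_range_mul_of_summable_norm hng hng
    simp only [ediag (ν+1) (ν+1)] at H
    exact H
  -- shifted series for s * x * x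
  have H3 : HasSum (fun m => s^(m+1) * EE ν (m+1))
      (s * ((∑' i : ℕ, s^i * cc (ν+1) i) * (∑' i : ℕ, s^i * cc (ν+1) i))) := by
    have H := Hxx.mul_left s
    have e : ∀ m : ℕ, s * (s^m * ∑ k ∈ Finset.range (m+1), cc (ν+1) k * cc (ν+1) (m-k))
        = s^(m+1) * EE ν (m+1) := by
      intro m
      show _ = s^(m+1) * ∑ k ∈ Finset.range (m+1), cc (ν+1) k * cc (ν+1) (m-k)
      ring
    simp only [e] at H
    exact H
  have Hu : HasSum (fun n => s^n * EE ν n)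
      (s * ((∑' i : ℕ, s^i * cc (ν+1) i) * (∑' i : ℕ, s^i * cc (ν+1) i))) := by
    have := (hasSum_nat_add_iff (f := fun n => s^n * EE ν n) 1).mp H3
    simpa [EE] using this
  -- combine
  have Htot := ((Hyy.mul_left 2).sub (Hyx.mul_left (2*ν-1))).sub (Hu.mul_left 2)
  have hterm : ∀ n : ℕ,
      0 < 2 * (s^n * ∑ k ∈ Finset.range (n+1), cc ν k * cc ν (n-k))
        - (2*ν-1) * (s^n * ∑ k ∈ Finset.range (n+1), cc ν k * cc (ν+1) (n-k))
        - 2 * (s^n * EE ν n) := by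
    intro n
    have e : 2 * (s^n * ∑ k ∈ Finset.range (n+1), cc ν k * cc ν (n-k))
        - (2*ν-1) * (s^n * ∑ k ∈ Finset.range (n+1), cc ν k * cc (ν+1) (n-k))
        - 2 * (s^n * EE ν n)
        = s^n * (2 * (∑ k ∈ Finset.range (n+1), cc ν k * cc ν (n-k))
            - (2*ν-1) * (∑ k ∈ Finset.range (n+1), cc ν k * cc (ν+1) (n-k))
            - 2 * EE ν n) := by ring
    rw [e]
    exact mul_pos (pow_pos hs n) (Phi_pos ν hν n)
  have := Summable.tsum_pos Htot.summable (fun n => (hterm n).le) 0 (hterm 0)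
  rwa [Htot.tsum_eq] at this

theorem stmt_17 (N : ℕ) (hN : 2 ≤ N) (b : ℝ) (hb : 0 < b) :
    0 < 1 - (((N : ℝ) - 1) / b) * (besselI ((N : ℝ) / 2) b / besselI ((N : ℝ) / 2 - 1) b)
        - (besselI ((N : ℝ) / 2) b / besselI ((N : ℝ) / 2 - 1) b) ^ 2 := by
  set ν : ℝ := (N : ℝ) / 2 with hνdef
  have hN2 : (2:ℝ) ≤ (N:ℝ) := by exact_mod_cast hN
  have hν : 1 ≤ ν := by rw [hνdef]; linarith
  have hν0 : (0:ℝ) < ν := by linarith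
  set t : ℝ := b / 2 with htdef
  have ht : (0:ℝ) < t := by rw [htdef]; linarith
  set s : ℝ := t^2 with hsdef
  have hs : (0:ℝ) < s := by rw [hsdef]; positivity
  set y : ℝ := ∑' i : ℕ, s^i * cc ν i with hydef
  set x : ℝ := ∑' i : ℕ, s^i * cc (ν+1) i with hxdef
  have hsumf : Summable (fun i : ℕ => s^i * cc ν i) := summable_cc hν hs.le
  have hy : 0 < y := by
    rw [hydef]
    exact Summable.tsum_pos hsumf
      (fun i => mul_nonneg (pow_nonneg hs.le i) (cc_pos hν0 i).le) 0
      (mul_pos (pow_pos hs 0) (cc_pos hν0 0))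
  have KEY : 0 < 2 * (y*y) - (2*ν-1) * (y*x) - 2 * (s * (x*x)) := KEY_pos ν hν s hs
  -- bessel representations
  have hXb : besselI ν b = t^ν * x := by
    rw [besselI_repr ν (by linarith) hb, ← htdef, ← hsdef]
  have hYb : besselI (ν-1) b = t^(ν-1) * y := by
    rw [besselI_repr (ν-1) (by linarith) hb, ← htdef, ← hsdef]
    have e : ν - 1 + 1 = ν := by ring
    rw [e]
  have hτ : t^ν = t^(ν-1) * t := by
    have h := Real.rpow_add ht (ν-1) 1
    rw [Real.rpow_one] at h
    have e : ν - 1 + 1 = ν := by ring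
    rw [e] at h
    exact h
  have hb2 : b = 2*t := by rw [htdef]; ring
  have hN1 : (N:ℝ) - 1 = 2*ν - 1 := by rw [hνdef]; ring
  have htν : (0:ℝ) < t^(ν-1) := Real.rpow_pos_of_pos ht _
  have goal_eq : 1 - (((N:ℝ)-1)/b) * ((t^ν*x)/(t^(ν-1)*y)) - ((t^ν*x)/(t^(ν-1)*y))^2
      = (2 * (y*y) - (2*ν-1) * (y*x) - 2 * (s * (x*x))) / (2*(y*y)) := by
    rw [hτ, hN1, hb2, hsdef]
    have h1 : t ≠ 0 := ne_of_gt ht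
    have h2 : t^(ν-1) ≠ 0 := ne_of_gt htν
    have h3 : y ≠ 0 := ne_of_gt hy
    field_simp
  rw [hXb, hYb, goal_eq]
  exact div_pos KEY (by positivity)
end

section
/- For the function f(b) = I_{N/2}(b)/I_{N/2-1}(b) with N ≥ 2 an integer, and b > 0 the unique positive solution of b = β f(b) for β > N, one has β f'(b) < 1. -/
open MeasureTheory Real Filter Asymptotics Set

namespace Stmt18Aux

/-- coefficient `1 / (m! * Γ(m + ν))` -/
noncomputable def co (ν : ℝ) (m : ℕ) : ℝ := 1 / (m.factorial * Real.Gamma ((m : ℝ) + ν))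

lemma co_pos {ν : ℝ} (hν : 0 < ν) (m : ℕ) : 0 < co ν m := by
  unfold co
  have h1 : 0 < Real.Gamma ((m : ℝ) + ν) := Real.Gamma_pos_of_pos (by positivity)
  have h2 : 0 < (m.factorial : ℝ) := by exact_mod_cast m.factorial_pos
  positivity

lemma gamma_succ {ν : ℝ} (hν : 0 < ν) (m : ℕ) :
    Real.Gamma (((m + 1 : ℕ) : ℝ) + ν) = ((m : ℝ) + ν) * Real.Gamma ((m : ℝ) + ν) := by
  have hne : ((m : ℝ) + ν) ≠ 0 := by positivity
  push_cast
  rw [show (m : ℝ) + 1 + ν = ((m : ℝ) + ν) + 1 by ring, Real.Gamma_add_one hne]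

lemma co_succ {ν : ℝ} (hν : 0 < ν) (m : ℕ) :
    co ν m = co ν (m + 1) * (((m : ℝ) + 1) * ((m : ℝ) + ν)) := by
  unfold co
  rw [gamma_succ hν m]
  have h1 : (m.factorial : ℝ) ≠ 0 := by exact_mod_cast m.factorial_ne_zero
  have h2 : Real.Gamma ((m : ℝ) + ν) ≠ 0 := (Real.Gamma_pos_of_pos (by positivity)).ne'
  have h3 : ((m + 1).factorial : ℝ) = ((m : ℝ) + 1) * m.factorial := by
    push_cast [Nat.factorial_succ]; ring
  rw [h3]
  have h4 : ((m : ℝ) + 1) ≠ 0 := by positivity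
  have h5 : ((m : ℝ) + ν) ≠ 0 := by positivity
  field_simp

lemma co_rel {ν : ℝ} (hν : 0 < ν) (m : ℕ) :
    co (ν + 1) m = co ν m / ((m : ℝ) + ν) := by
  unfold co
  have hne : ((m : ℝ) + ν) ≠ 0 := by positivity
  rw [show (m : ℝ) + (ν + 1) = ((m : ℝ) + ν) + 1 by ring, Real.Gamma_add_one hne]
  have h1 : (m.factorial : ℝ) ≠ 0 := by exact_mod_cast m.factorial_ne_zero
  have h2 : Real.Gamma ((m : ℝ) + ν) ≠ 0 := (Real.Gamma_pos_of_pos (by positivity)).ne'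
  field_simp

lemma summable_aux {ν : ℝ} (hν : 0 < ν) {R : ℝ} (hR : 0 ≤ R) :
    Summable (fun n : ℕ => ((n : ℝ) + 1) * co ν n * R ^ n) := by
  apply summable_of_ratio_norm_eventually_le (r := 1/2) (by norm_num)
  filter_upwards [eventually_ge_atTop (⌈2 * R⌉₊)] with n hn
  have hn' : 2 * R ≤ (n : ℝ) := le_trans (Nat.le_ceil _) (by exact_mod_cast hn)
  have hc := co_pos hν (n + 1)
  have hx : (0 : ℝ) ≤ R ^ n := pow_nonneg hR n
  have hrec := co_succ hν n
  have e1 : (0:ℝ) ≤ (((n:ℕ):ℝ) + 1 + 1) * co ν (n+1) * R ^ (n+1) := by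
    have := co_pos hν (n+1); positivity
  have e2 : (0:ℝ) ≤ ((n:ℝ) + 1) * co ν n * R ^ n := by
    have := co_pos hν n; positivity
  rw [Real.norm_eq_abs, Real.norm_eq_abs]
  push_cast
  rw [abs_of_nonneg (by push_cast at e1 ⊢; exact e1), abs_of_nonneg e2]
  rw [hrec, pow_succ]
  have hp : (0 : ℝ) ≤ co ν (n+1) * R ^ n := by positivity
  have h1 : ((n:ℝ) + 2) * R ≤ (1/2) * (((n:ℝ) + 1) * (((n:ℝ) + 1) * ((n:ℝ) + ν))) := by
    rcases Nat.eq_zero_or_pos n with h | h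
    · subst h
      simp only [Nat.cast_zero] at hn' ⊢
      nlinarith [hn', hR, hν]
    · have h1n : (1:ℝ) ≤ (n:ℝ) := by exact_mod_cast h
      have key2 : ((n:ℝ) + 2) * (2*R) ≤ ((n:ℝ) + 2) * (n:ℝ) :=
        mul_le_mul_of_nonneg_left hn' (by positivity)
      nlinarith [key2, hR, hν, h1n, mul_nonneg (mul_nonneg (sub_nonneg.2 h1n) (Nat.cast_nonneg n : (0:ℝ) ≤ n)) (Nat.cast_nonneg n : (0:ℝ) ≤ n), mul_pos hν (mul_pos (show (0:ℝ) < (n:ℝ)+1 by linarith) (show (0:ℝ) < (n:ℝ)+1 by linarith))]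
  nlinarith [mul_le_mul_of_nonneg_right h1 hp]

lemma summable_S {ν : ℝ} (hν : 0 < ν) (x : ℝ) :
    Summable (fun m : ℕ => co ν m * x ^ m) := by
  apply Summable.of_norm_bounded (summable_aux hν (abs_nonneg x))
  intro m
  have hc := co_pos hν m
  have h1 : ‖co ν m * x ^ m‖ = co ν m * |x| ^ m := by
    rw [norm_mul, Real.norm_eq_abs, Real.norm_eq_abs, abs_of_nonneg hc.le, abs_pow]
  rw [h1]
  have : (0:ℝ) ≤ co ν m * |x| ^ m := by positivity
  nlinarith [this]

lemma summable_D {ν : ℝ} (hν : 0 < ν) (x : ℝ) :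
    Summable (fun m : ℕ => co ν m * ((m : ℝ) * x ^ (m - 1))) := by
  set R : ℝ := max |x| 1 with hRdef
  have hR1 : (1 : ℝ) ≤ R := le_max_right _ _
  have hRx : |x| ≤ R := le_max_left _ _
  have hR0 : (0 : ℝ) ≤ R := le_trans zero_le_one hR1
  apply Summable.of_norm_bounded (summable_aux hν hR0)
  intro m
  have hc := co_pos hν m
  have h1 : |x| ^ (m - 1) ≤ R ^ m :=
    le_trans (pow_le_pow_left₀ (abs_nonneg x) hRx _) (pow_le_pow_right₀ hR1 (Nat.sub_le m 1))
  have h2 : ‖co ν m * ((m : ℝ) * x ^ (m - 1))‖ = co ν m * ((m : ℝ) * |x| ^ (m - 1)) := by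
    rw [norm_mul, Real.norm_eq_abs, Real.norm_eq_abs, abs_of_nonneg hc.le, abs_mul,
      abs_of_nonneg (Nat.cast_nonneg m), abs_pow]
  rw [h2]
  have h3 : co ν m * ((m : ℝ) * |x| ^ (m - 1)) ≤ co ν m * ((m : ℝ) * R ^ m) := by
    apply mul_le_mul_of_nonneg_left _ hc.le
    exact mul_le_mul_of_nonneg_left h1 (Nat.cast_nonneg m)
  have h4 : co ν m * ((m : ℝ) * R ^ m) ≤ ((m : ℝ) + 1) * co ν m * R ^ m := by
    have : (0:ℝ) ≤ R ^ m := by positivity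
    nlinarith [hc]
  linarith

lemma hasDerivAt_S {ν : ℝ} (hν : 0 < ν) (x : ℝ) :
    HasDerivAt (fun u : ℝ => ∑' m : ℕ, co ν m * u ^ m)
      (∑' m : ℕ, co ν m * ((m : ℝ) * x ^ (m - 1))) x := by
  set T : ℝ := |x| + 1 with hTdef
  set R : ℝ := max T 1 with hRdef
  have hR1 : (1 : ℝ) ≤ R := le_max_right _ _
  have hTR : T ≤ R := le_max_left _ _
  have hR0 : (0 : ℝ) ≤ R := le_trans zero_le_one hR1
  have hxmem : x ∈ Ioo (-T) T := by
    constructor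
    · have : |x| < T := by rw [hTdef]; linarith [abs_nonneg x]
      linarith [neg_abs_le x, (abs_lt.mp this).1]
    · linarith [le_abs_self x, abs_nonneg x]
  apply hasDerivAt_tsum_of_isPreconnected (u := fun m : ℕ => ((m : ℝ) + 1) * co ν m * R ^ m)
    (summable_aux hν hR0) isOpen_Ioo isPreconnected_Ioo
    (fun n y _ => HasDerivAt.const_mul (co ν n) (hasDerivAt_pow n y))
    (fun n y hy => ?_) hxmem (summable_S hν x) hxmem
  -- bound on derivatives on the interval
  have hy' : |y| ≤ R := by
    rw [abs_le]
    constructor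
    · linarith [hy.1]
    · linarith [hy.2]
  have hc := co_pos hν n
  have h1 : |y| ^ (n - 1) ≤ R ^ n :=
    le_trans (pow_le_pow_left₀ (abs_nonneg y) hy' _) (pow_le_pow_right₀ hR1 (Nat.sub_le n 1))
  have h2 : ‖co ν n * ((n : ℝ) * y ^ (n - 1))‖ = co ν n * ((n : ℝ) * |y| ^ (n - 1)) := by
    rw [norm_mul, Real.norm_eq_abs, Real.norm_eq_abs, abs_of_nonneg hc.le, abs_mul,
      abs_of_nonneg (Nat.cast_nonneg n), abs_pow]
  rw [h2]
  show co ν n * ((n : ℝ) * |y| ^ (n - 1)) ≤ ((n : ℝ) + 1) * co ν n * R ^ n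
  have h3 : co ν n * ((n : ℝ) * |y| ^ (n - 1)) ≤ co ν n * ((n : ℝ) * R ^ n) := by
    apply mul_le_mul_of_nonneg_left _ hc.le
    exact mul_le_mul_of_nonneg_left h1 (Nat.cast_nonneg n)
  have h4 : co ν n * ((n : ℝ) * R ^ n) ≤ ((n : ℝ) + 1) * co ν n * R ^ n := by
    have : (0:ℝ) ≤ R ^ n := by positivity
    nlinarith [hc]
  linarith

lemma S_pos {ν : ℝ} (hν : 0 < ν) {u : ℝ} (hu : 0 < u) :
    0 < ∑' m : ℕ, co ν m * u ^ m := by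
  apply Summable.tsum_pos (summable_S hν u) (fun m => ?_) 0
  · exact mul_pos (co_pos hν 0) (pow_pos hu 0)
  · have := co_pos hν m
    positivity

lemma mul_pow_pred {t : ℝ} (ht : t ≠ 0) (i : ℕ) :
    (i : ℝ) * t ^ (i - 1) = (i : ℝ) * t ^ i / t := by
  cases i with
  | zero => simp
  | succ n =>
    have : (n + 1) - 1 = n := rfl
    rw [this, pow_succ]
    field_simp

set_option maxHeartbeats 1000000 in
lemma pair_identity {ν : ℝ} (hν : 0 < ν) {t : ℝ} (ht : 0 < t) (i j : ℕ) :
    (co (ν+1) i * ((i:ℝ) * t ^ (i-1)) * (co ν j * t ^ j)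
        - co (ν+1) i * t ^ i * (co ν j * ((j:ℝ) * t ^ (j-1))))
      + (co (ν+1) j * ((j:ℝ) * t ^ (j-1)) * (co ν i * t ^ i)
        - co (ν+1) j * t ^ j * (co ν i * ((i:ℝ) * t ^ (i-1))))
    = -(((i:ℝ) - (j:ℝ))^2 * co ν i * co ν j * t ^ i * t ^ j)
        / (((i:ℝ) + ν) * (((j:ℝ) + ν)) * t) := by
  have hti : t ≠ 0 := ht.ne'
  have hiν : ((i:ℝ) + ν) ≠ 0 := by positivity
  have hjν : ((j:ℝ) + ν) ≠ 0 := by positivity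
  rw [mul_pow_pred hti i, mul_pow_pred hti j, co_rel hν i, co_rel hν j]
  field_simp
  ring

set_option maxHeartbeats 1000000 in
lemma key_ineq {ν : ℝ} (hν : 0 < ν) {t : ℝ} (ht : 0 < t) :
    (∑' m : ℕ, co (ν+1) m * ((m:ℝ) * t ^ (m-1))) * (∑' m : ℕ, co ν m * t ^ m)
      - (∑' m : ℕ, co (ν+1) m * t ^ m) * (∑' m : ℕ, co ν m * ((m:ℝ) * t ^ (m-1))) < 0 := by
  have hν1 : (0:ℝ) < ν + 1 := by linarith
  have sA' := summable_D hν1 t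
  have sA := summable_S hν1 t
  have sB := summable_S hν t
  have sB' := summable_D hν t
  have nnA' : ∀ m : ℕ, 0 ≤ co (ν+1) m * ((m:ℝ) * t ^ (m-1)) := fun m => by
    have := co_pos hν1 m; positivity
  have nnA : ∀ m : ℕ, 0 ≤ co (ν+1) m * t ^ m := fun m => by
    have := co_pos hν1 m; positivity
  have nnB : ∀ m : ℕ, 0 ≤ co ν m * t ^ m := fun m => by
    have := co_pos hν m; positivity
  have nnB' : ∀ m : ℕ, 0 ≤ co ν m * ((m:ℝ) * t ^ (m-1)) := fun m => by
    have := co_pos hν m; positivity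
  have hP1 : Summable (fun p : ℕ × ℕ =>
      (co (ν+1) p.1 * ((p.1:ℝ) * t ^ (p.1-1))) * (co ν p.2 * t ^ p.2)) :=
    sA'.mul_of_nonneg sB nnA' nnB
  have hP2 : Summable (fun p : ℕ × ℕ =>
      (co (ν+1) p.1 * t ^ p.1) * (co ν p.2 * ((p.2:ℝ) * t ^ (p.2-1)))) :=
    sA.mul_of_nonneg sB' nnA nnB'
  rw [Summable.tsum_mul_tsum sA' sB hP1, Summable.tsum_mul_tsum sA sB' hP2, ← Summable.tsum_sub hP1 hP2]
  set q : ℕ × ℕ → ℝ := fun p =>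
    (co (ν+1) p.1 * ((p.1:ℝ) * t ^ (p.1-1))) * (co ν p.2 * t ^ p.2)
      - (co (ν+1) p.1 * t ^ p.1) * (co ν p.2 * ((p.2:ℝ) * t ^ (p.2-1))) with hqdef
  have hq : Summable q := hP1.sub hP2
  have hqs : Summable (fun p : ℕ × ℕ => q (p.2, p.1)) := by
    have : (fun p : ℕ × ℕ => q (p.2, p.1)) = q ∘ (Equiv.prodComm ℕ ℕ) := rfl
    rw [this, Equiv.summable_iff]
    exact hq
  have hswap : ∑' p : ℕ × ℕ, q p = ∑' p : ℕ × ℕ, q (p.2, p.1) := by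
    have := (Equiv.prodComm ℕ ℕ).tsum_eq q
    rw [← this]
    rfl
  have h2 : 2 * ∑' p : ℕ × ℕ, q p = ∑' p : ℕ × ℕ, (q p + q (p.2, p.1)) := by
    rw [Summable.tsum_add hq hqs, ← hswap]; ring
  have hneg : ∑' p : ℕ × ℕ, (q p + q (p.2, p.1)) < 0 := by
    have hsum : Summable (fun p : ℕ × ℕ => q p + q (p.2, p.1)) := hq.add hqs
    have hle : ∀ p : ℕ × ℕ, q p + q (p.2, p.1) ≤ 0 := by
      intro p
      rw [hqdef]
      simp only
      rw [pair_identity hν ht p.1 p.2]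
      apply div_nonpos_of_nonpos_of_nonneg
      · have h1 := co_pos hν p.1
        have h2 := co_pos hν p.2
        have : 0 ≤ (((p.1:ℝ) - (p.2:ℝ))^2 * co ν p.1 * co ν p.2 * t ^ p.1 * t ^ p.2) := by
          positivity
        linarith
      · positivity
    have hlt : q (0, 1) + q ((0,1).2, (0,1).1) < 0 := by
      rw [hqdef]
      simp only
      rw [pair_identity hν ht 0 1]
      apply div_neg_of_neg_of_pos
      · have h1 := co_pos hν 0
        have h2 := co_pos hν 1
        have : 0 < (((0:ℕ):ℝ) - ((1:ℕ):ℝ))^2 * co ν 0 * co ν 1 * t ^ (0:ℕ) * t ^ (1:ℕ) := by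
          norm_num
          positivity
        linarith
      · positivity
    calc ∑' p : ℕ × ℕ, (q p + q (p.2, p.1)) < ∑' _ : ℕ × ℕ, (0:ℝ) :=
          Summable.tsum_lt_tsum hle hlt hsum summable_zero
      _ = 0 := tsum_zero
  linarith

lemma besselI_eq {μ : ℝ} {x : ℝ} (hx : 0 < x) :
    besselI μ x = (x/2) ^ μ * ∑' m : ℕ, co (μ+1) m * ((x/2)^2) ^ m := by
  unfold besselI co
  rw [← tsum_mul_left]
  apply tsum_congr
  intro m
  have hx2 : (0:ℝ) < x/2 := by linarith
  have e2 : (x/2:ℝ) ^ (2*(m:ℝ)+μ) = (x/2) ^ μ * ((x/2)^2) ^ m := by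
    rw [Real.rpow_add hx2, show (2*(m:ℝ)) = ((2*m : ℕ) : ℝ) by push_cast; ring,
      Real.rpow_natCast, pow_mul, mul_comm]
  rw [e2, show (m:ℝ) + (μ+1) = (m:ℝ) + μ + 1 by ring]
  ring

lemma ratio_eq {ν : ℝ} {x : ℝ} (hx : 0 < x) :
    besselI ν x / besselI (ν-1) x
      = ((x/2) * ∑' m : ℕ, co (ν+1) m * ((x/2)^2) ^ m)
          / (∑' m : ℕ, co ν m * ((x/2)^2) ^ m) := by
  have hx2 : (0:ℝ) < x/2 := by linarith
  rw [besselI_eq hx, besselI_eq hx, show ν - 1 + 1 = ν by ring]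
  have hc : (x/2:ℝ) ^ (ν-1) ≠ 0 := (Real.rpow_pos_of_pos hx2 _).ne'
  have hpow : (x/2:ℝ) ^ ν = (x/2) ^ (ν-1) * (x/2) := by
    rw [show ν = (ν-1)+1 by ring, Real.rpow_add hx2, Real.rpow_one]
    ring_nf
  rw [hpow, mul_assoc, ← mul_assoc ((x/2:ℝ) ^ (ν-1)) _ _]
  rw [show (x/2:ℝ) ^ (ν-1) * (x/2) * (∑' m : ℕ, co (ν+1) m * ((x/2)^2) ^ m)
      = (x/2:ℝ) ^ (ν-1) * ((x/2) * ∑' m : ℕ, co (ν+1) m * ((x/2)^2) ^ m) by ring]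
  rw [mul_div_mul_left _ _ hc]

end Stmt18Aux

open Stmt18Aux in
set_option maxHeartbeats 1000000 in
theorem stmt_18 (N : ℕ) (hN : 2 ≤ N) (β b : ℝ) (hβ : (N : ℝ) < β) (hb : 0 < b)
    (hsol : b = β * (besselI ((N : ℝ) / 2) b / besselI ((N : ℝ) / 2 - 1) b)) :
    β * deriv (fun x => besselI ((N : ℝ) / 2) x / besselI ((N : ℝ) / 2 - 1) x) b < 1 := by
  have hN2 : (2:ℝ) ≤ (N:ℝ) := by exact_mod_cast hN
  set ν : ℝ := (N:ℝ)/2 with hνdef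
  have hν0 : (0:ℝ) < ν := by rw [hνdef]; linarith
  have hν1 : (0:ℝ) < ν + 1 := by linarith
  have hb2 : (0:ℝ) < b/2 := by linarith
  set t : ℝ := (b/2)^2 with htdef
  have ht : (0:ℝ) < t := by positivity
  set A : ℝ := ∑' m : ℕ, co (ν+1) m * t ^ m with hAdef
  set Bv : ℝ := ∑' m : ℕ, co ν m * t ^ m with hBdef
  set A' : ℝ := ∑' m : ℕ, co (ν+1) m * ((m:ℝ) * t ^ (m-1)) with hA'def
  set B' : ℝ := ∑' m : ℕ, co ν m * ((m:ℝ) * t ^ (m-1)) with hB'def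
  have hB : 0 < Bv := S_pos hν0 ht
  have hA : 0 < A := S_pos hν1 ht
  -- replace the Bessel ratio by the explicit series function
  set H : ℝ → ℝ := fun x =>
    ((x/2) * ∑' m : ℕ, co (ν+1) m * ((x/2)^2) ^ m) / (∑' m : ℕ, co ν m * ((x/2)^2) ^ m)
    with hHdef
  have heq : (fun x => besselI ν x / besselI (ν-1) x) =ᶠ[nhds b] H := by
    filter_upwards [Ioi_mem_nhds hb] with x hx
    exact ratio_eq hx
  rw [heq.deriv_eq]
  -- compute the derivative of H at b
  have hu : HasDerivAt (fun x : ℝ => (x/2)^2) (b/2) b := by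
    have h0 : HasDerivAt (fun x : ℝ => x/2) (1/2) b := (hasDerivAt_id b).div_const 2
    have h1 := h0.fun_pow 2
    refine h1.congr_deriv ?_
    push_cast
    ring
  have hSA : HasDerivAt (fun x : ℝ => ∑' m : ℕ, co (ν+1) m * ((x/2)^2) ^ m)
      (A' * (b/2)) b := by
    have := (hasDerivAt_S hν1 t).comp b hu
    simpa [Function.comp_def] using this
  have hSB : HasDerivAt (fun x : ℝ => ∑' m : ℕ, co ν m * ((x/2)^2) ^ m)
      (B' * (b/2)) b := by
    have := (hasDerivAt_S hν0 t).comp b hu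
    simpa [Function.comp_def] using this
  have hnum : HasDerivAt (fun x : ℝ => (x/2) * ∑' m : ℕ, co (ν+1) m * ((x/2)^2) ^ m)
      (1/2 * A + (b/2) * (A' * (b/2))) b :=
    ((hasDerivAt_id b).div_const 2).mul hSA
  have hH : HasDerivAt H
      (((1/2 * A + (b/2) * (A' * (b/2))) * Bv - ((b/2) * A) * (B' * (b/2))) / Bv^2) b :=
    hnum.div hSB hB.ne'
  rw [hH.deriv]
  -- use the fixed point equation
  have hsol' : β * A = 2 * Bv := by
    have h1 := ratio_eq (ν := ν) hb
    rw [h1] at hsol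
    rw [← htdef, ← hAdef, ← hBdef] at hsol
    have hBne : Bv ≠ 0 := hB.ne'
    have h2 : b * Bv = β * (b/2 * A) := by
      conv_lhs => rw [hsol]
      rw [mul_assoc, div_mul_cancel₀ _ hBne]
    have h3 : b * (β * A) = b * (2 * Bv) := by linear_combination (-2) * h2
    exact mul_left_cancel₀ hb.ne' h3
  have hE : A' * Bv - A * B' < 0 := key_ineq hν0 ht
  have hβpos : (0:ℝ) < β := by linarith
  have hrw : β * ((( 1/2 * A + (b/2) * (A' * (b/2))) * Bv - ((b/2) * A) * (B' * (b/2))) / Bv^2)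
      = (β * ((1/2 * A + (b/2) * (A' * (b/2))) * Bv - ((b/2) * A) * (B' * (b/2)))) / Bv^2 := by
    ring
  rw [hrw, div_lt_one (by positivity)]
  have expand : β * ((1/2 * A + (b/2) * (A' * (b/2))) * Bv - ((b/2) * A) * (B' * (b/2)))
      = (β * A) * Bv / 2 + b^2/4 * (β * (A' * Bv - A * B')) := by ring
  rw [expand, hsol']
  have hneg : b^2/4 * (β * (A' * Bv - A * B')) < 0 :=
    mul_neg_of_pos_of_neg (by positivity) (mul_neg_of_pos_of_neg hβpos hE)
  nlinarith [hneg, hB]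
end
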